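/- If X ∪ {t} ⊆ C and X ⊢_dy t, then there is a proof π* of nf(Xσ) ⊢ nf(tσ) such that terms(π*) ⊆ nf(Cσ), and moreover conc(δ*) ∈ nf(Dσ) for every subproof δ* of π* whose last rule is pair, aenc or senc. -/

import Mathlib

/- A formalization of the Dolev-Yao intruder model with XOR, following
"Protocol insecurity with finitely many sessions and XOR".
Multisets of terms (for the XOR operator) are represented by lists;
the normal form of an XOR term is represented canonically by sorting the
(normalized) factors in a fixed linear order (via an injective encoding of
terms into ℕ) and cancelling pairs of equal factors (nilpotence). -/

namespace DYXor

/-- Terms: variables, names (with the distinguished names `0` and `secret`,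
and keys among the names), public keys, pairs, symmetric and asymmetric
encryptions, and XORs of (multi)sets of terms. -/
inductive Term : Type where
  | var : ℕ → Term
  | name : ℕ → Term
  | pk : Term → Term
  | pair : Term → Term → Term
  | senc : Term → Term → Term
  | aenc : Term → Term → Term
  | xor : List Term → Term

/-- The distinguished name `0`, the unit of XOR. -/
def Term.zero : Term := .name 0

/-- The distinguished name `secret`. -/
def Term.secret : Term := .name 1

/-- A term is standard if it is not an XOR term. -/
def Term.IsStandard : Term → Prop
  | .xor _ => False
  | _ => True

/-- The factors of a term, as a list (representing a multiset):
`fac(t) = {t}` for standard `t`, and the multiset union of the factors of the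
members for an XOR term. -/
def facL : Term → List Term
  | .var x => [.var x]
  | .name a => [.name a]
  | .pk u => [.pk u]
  | .pair u v => [.pair u v]
  | .senc u v => [.senc u v]
  | .aenc u v => [.aenc u v]
  | .xor M => M.attach.flatMap fun u => facL u.1
decreasing_by
  have := List.sizeOf_lt_of_mem u.2
  simp only [Term.xor.sizeOf_spec]
  omega

/-- An injective encoding of terms into ℕ, fixing a canonical linear order on
terms. -/
def encode : Term → ℕ
  | .var x => Nat.pair 0 x + 1
  | .name a => Nat.pair 1 a + 1
  | .pk u => Nat.pair 2 (encode u) + 1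
  | .pair u v => Nat.pair 3 (Nat.pair (encode u) (encode v)) + 1
  | .senc u v => Nat.pair 4 (Nat.pair (encode u) (encode v)) + 1
  | .aenc u v => Nat.pair 5 (Nat.pair (encode u) (encode v)) + 1
  | .xor M => Nat.pair 6 ((M.attach.map fun u => encode u.1).foldr (fun a b => Nat.pair a b + 1) 0) + 1
decreasing_by
  all_goals first
  | (have := List.sizeOf_lt_of_mem u.2; simp only [Term.xor.sizeOf_spec]; omega)
  | (simp only [Term.pk.sizeOf_spec, Term.pair.sizeOf_spec, Term.senc.sizeOf_spec,
      Term.aenc.sizeOf_spec]; omega)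

/-- Sort a list of terms in the canonical order. -/
def sortT (l : List Term) : List Term :=
  l.mergeSort fun a b => Nat.ble (encode a) (encode b)

/-- On a (sorted) list, remove pairs of equal adjacent elements, keeping
exactly the elements that occur an odd number of times (nilpotence of ⊕). -/
def cancel : List Term → List Term
  | [] => []
  | [a] => [a]
  | a :: b :: rest =>
      if encode a = encode b then cancel rest else a :: cancel (b :: rest)

/-- `xorOf B` is the term `⊕B`, with the conventions `⊕∅ := 0` and `⊕{t} := t`. -/
def xorOf : List Term → Term
  | [] => Term.zero
  | [t] => t
  | l => .xor l

theorem sizeOf_le_of_mem_facL : ∀ (t : Term), ∀ u ∈ facL t, sizeOf u ≤ sizeOf t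
  | .xor M => by
    intro u hu
    rw [facL] at hu
    simp only [List.mem_flatMap, List.mem_attach, true_and] at hu
    obtain ⟨⟨m, hm⟩, hu⟩ := hu
    have h1 : sizeOf u ≤ sizeOf m := sizeOf_le_of_mem_facL m u hu
    have h2 := List.sizeOf_lt_of_mem hm
    simp only [Term.xor.sizeOf_spec]
    omega
  | .var x => by intro u hu; rw [facL] at hu; simp at hu; simp [hu]
  | .name a => by intro u hu; rw [facL] at hu; simp at hu; simp [hu]
  | .pk v => by intro u hu; rw [facL] at hu; simp at hu; simp [hu]
  | .pair v w => by intro u hu; rw [facL] at hu; simp at hu; simp [hu]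
  | .senc v w => by intro u hu; rw [facL] at hu; simp at hu; simp [hu]
  | .aenc v w => by intro u hu; rw [facL] at hu; simp at hu; simp [hu]
decreasing_by
  all_goals (have := List.sizeOf_lt_of_mem hm; simp only [Term.xor.sizeOf_spec]; omega)

theorem sizeOf_lt_of_mem_facL_xor (M : List Term) :
    ∀ u ∈ facL (.xor M), sizeOf u < sizeOf (Term.xor M) := by
  intro u hu
  rw [facL] at hu
  simp only [List.mem_flatMap, List.mem_attach, true_and] at hu
  obtain ⟨⟨m, hm⟩, hu⟩ := hu
  have h1 := sizeOf_le_of_mem_facL m u hu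
  have h2 := List.sizeOf_lt_of_mem hm
  simp only [Term.xor.sizeOf_spec]
  omega

/-- The normal form `nf(t)` of a term, implementing associativity,
commutativity, the unit `0` and nilpotence of ⊕: the normal form of an XOR
term `r` is the XOR of the *set* of those terms `v` such that the number of
factors `u ∈ fac(r)` with `nf(u) = v` is odd (represented canonically as a
sorted list). -/
def nf : Term → Term
  | .var x => .var x
  | .name a => .name a
  | .pk u => .pk (nf u)
  | .pair u v => .pair (nf u) (nf v)
  | .senc u v => .senc (nf u) (nf v)
  | .aenc u v => .aenc (nf u) (nf v)
  | .xor M => xorOf (cancel (sortT ((facL (.xor M)).attach.map fun u => nf u.1)))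
decreasing_by
  all_goals first
  | (exact sizeOf_lt_of_mem_facL_xor M u.1 u.2)
  | (simp only [Term.pk.sizeOf_spec, Term.pair.sizeOf_spec, Term.senc.sizeOf_spec,
      Term.aenc.sizeOf_spec]; omega)

/-- A term is normalized if it equals its normal form. -/
def Term.Normalized (t : Term) : Prop := nf t = t

/-- Application of a substitution (a map from variables to terms, the identity
outside its domain), extended homomorphically to all terms. -/
def subst (σ : ℕ → Term) : Term → Term
  | .var x => σ x
  | .name a => .name a
  | .pk u => .pk (subst σ u)
  | .pair u v => .pair (subst σ u) (subst σ v)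
  | .senc u v => .senc (subst σ u) (subst σ v)
  | .aenc u v => .aenc (subst σ u) (subst σ v)
  | .xor M => .xor (M.attach.map fun u => subst σ u.1)
decreasing_by
  all_goals first
  | (have := List.sizeOf_lt_of_mem u.2; simp only [Term.xor.sizeOf_spec]; omega)
  | (simp only [Term.pk.sizeOf_spec, Term.pair.sizeOf_spec, Term.senc.sizeOf_spec,
      Term.aenc.sizeOf_spec]; omega)

/-- `IsFactor u t`: `u` occurs in the multiset `fac(t)` of factors of `t`. -/
inductive IsFactor : Term → Term → Prop where
  | std {t : Term} : t.IsStandard → IsFactor t t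
  | xor {t u : Term} {M : List Term} : u ∈ M → IsFactor t u → IsFactor t (.xor M)

/-- The subterm relation: `Subterm u t` iff `u ∈ st(t)`. -/
inductive Subterm : Term → Term → Prop where
  | refl (t : Term) : Subterm t t
  | pk {s u : Term} : Subterm s u → Subterm s (.pk u)
  | pair_l {s u v : Term} : Subterm s u → Subterm s (.pair u v)
  | pair_r {s u v : Term} : Subterm s v → Subterm s (.pair u v)
  | senc_l {s u v : Term} : Subterm s u → Subterm s (.senc u v)
  | senc_r {s u v : Term} : Subterm s v → Subterm s (.senc u v)
  | aenc_l {s u v : Term} : Subterm s u → Subterm s (.aenc u v)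
  | aenc_r {s u v : Term} : Subterm s v → Subterm s (.aenc u v)
  | xor {s u : Term} {M : List Term} :
      IsFactor u (.xor M) → Subterm s u → Subterm s (.xor M)

/-- `st(t)` as a set of terms. -/
def stT (t : Term) : Set Term := {u | Subterm u t}

/-- `st(X)` for a set of terms `X`. -/
def stSet (X : Set Term) : Set Term := {u | ∃ t ∈ X, Subterm u t}

/-- The variables occurring in a term. -/
def varsT (t : Term) : Set ℕ := {x | Subterm (.var x) t}

/-- A term is ground if no variable occurs in it. -/
def Ground (t : Term) : Prop := ∀ x : ℕ, ¬ Subterm (.var x) t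

/-- The rules of the Dolev-Yao derivation system. -/
inductive Rule : Type where
  | ax | split1 | split2 | sdec | adec | pkR | pairR | sencR | aencR | xorR
  deriving DecidableEq

/-- Proof trees: each node carries a term (its conclusion) and a rule. -/
inductive PTree : Type where
  | node : Term → Rule → List PTree → PTree

/-- The conclusion of a proof: the term at its root. -/
def PTree.conc : PTree → Term
  | .node t _ _ => t

/-- The last rule of a proof: the rule at its root. -/
def PTree.rule : PTree → Rule
  | .node _ r _ => r

/-- `IsProof X π` says that `π` is a derivation (proof) of `X ⊢ conc(π)`:
every node is labelled by a normalized term and is a correct instance of a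
Dolev-Yao rule, and `ax`-leaves are labelled by terms of `X`. -/
inductive IsProof (X : Set Term) : PTree → Prop where
  | ax {t : Term} : t ∈ X → nf t = t → IsProof X (.node t .ax [])
  | split1 {t u : Term} {δ : PTree} :
      IsProof X δ → δ.conc = .pair t u → IsProof X (.node t .split1 [δ])
  | split2 {t u : Term} {δ : PTree} :
      IsProof X δ → δ.conc = .pair t u → IsProof X (.node u .split2 [δ])
  | sdec {t v : Term} {δ₁ δ₂ : PTree} :
      IsProof X δ₁ → IsProof X δ₂ → δ₁.conc = .senc t v → δ₂.conc = v →
      IsProof X (.node t .sdec [δ₁, δ₂])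
  | adec {t : Term} {k : ℕ} {δ₁ δ₂ : PTree} :
      IsProof X δ₁ → IsProof X δ₂ → δ₁.conc = .aenc t (.pk (.name k)) →
      δ₂.conc = .name k → IsProof X (.node t .adec [δ₁, δ₂])
  | pkR {k : ℕ} {δ : PTree} :
      IsProof X δ → δ.conc = .name k → IsProof X (.node (.pk (.name k)) .pkR [δ])
  | pairR {δ₁ δ₂ : PTree} :
      IsProof X δ₁ → IsProof X δ₂ →
      IsProof X (.node (.pair δ₁.conc δ₂.conc) .pairR [δ₁, δ₂])
  | sencR {δ₁ δ₂ : PTree} :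
      IsProof X δ₁ → IsProof X δ₂ →
      IsProof X (.node (.senc δ₁.conc δ₂.conc) .sencR [δ₁, δ₂])
  | aencR {k : ℕ} {δ₁ δ₂ : PTree} :
      IsProof X δ₁ → IsProof X δ₂ → δ₂.conc = .pk (.name k) →
      IsProof X (.node (.aenc δ₁.conc (.pk (.name k))) .aencR [δ₁, δ₂])
  | xorR {l : List PTree} :
      (∀ δ ∈ l, IsProof X δ) →
      IsProof X (.node (nf (.xor (l.map PTree.conc))) .xorR l)

/-- `X ⊢_dy t`: there is a proof of `X ⊢ t`. -/
def Derives (X : Set Term) (t : Term) : Prop :=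
  ∃ π : PTree, IsProof X π ∧ π.conc = t

/-- The subproof (subtree) relation on proof trees. -/
inductive Subproof : PTree → PTree → Prop where
  | refl (π : PTree) : Subproof π π
  | child {π δ : PTree} {t : Term} {r : Rule} {l : List PTree} :
      δ ∈ l → Subproof π δ → Subproof π (.node t r l)

/-- `terms(π)`: the set of terms labelling the nodes of `π`. -/
def termsOf (π : PTree) : Set Term := {u | ∃ δ : PTree, Subproof δ π ∧ δ.conc = u}

/-- `axioms(π)`: the set of terms labelling the `ax`-leaves of `π`. -/
def axiomsOf (π : PTree) : Set Term :=
  {u | ∃ δ : PTree, Subproof δ π ∧ δ.rule = .ax ∧ δ.conc = u}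

/-- The constructor rules `pk`, `pair`, `senc`, `aenc`. -/
def Rule.IsConstructor (r : Rule) : Prop :=
  r = .pkR ∨ r = .pairR ∨ r = .sencR ∨ r = .aencR

/-- The destructor rules `split`, `sdec`, `adec` (excluding `xor_d`). -/
def Rule.IsBasicDestructor (r : Rule) : Prop :=
  r = .split1 ∨ r = .split2 ∨ r = .sdec ∨ r = .adec

/-- A proof ends in a destructor if its last rule is `split`/`sdec`/`adec`,
or is an `xor` with standard conclusion (`xor_d`). -/
def PTree.EndsInDestructor (π : PTree) : Prop :=
  π.rule.IsBasicDestructor ∨ (π.rule = .xorR ∧ π.conc.IsStandard)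

/-- Normal proofs: (1) no occurrence of `split`/`sdec`/`adec` has its leftmost
(major) premise derived by a constructor rule; (2) in every occurrence of the
`xor` rule, no two premises are equal, no premise equals the conclusion, and no
premise is derived by an `xor` rule. -/
inductive Normal : PTree → Prop where
  | mk {t : Term} {r : Rule} {l : List PTree} :
      (∀ δ ∈ l, Normal δ) →
      (r.IsBasicDestructor → ∀ δ₁ ∈ l.head?, ¬ δ₁.rule.IsConstructor) →
      (r = .xorR →
        (l.map PTree.conc).Nodup ∧ (∀ δ ∈ l, δ.conc ≠ t) ∧ (∀ δ ∈ l, δ.rule ≠ .xorR)) →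
      Normal (.node t r l)

/-- `RuleStep Y u`: `u` is the conclusion of a rule instance all of whose
premises lie in `Y`. -/
inductive RuleStep (Y : Set Term) : Term → Prop where
  | split1 {t u : Term} : Term.pair t u ∈ Y → RuleStep Y t
  | split2 {t u : Term} : Term.pair t u ∈ Y → RuleStep Y u
  | sdec {t v : Term} : Term.senc t v ∈ Y → v ∈ Y → RuleStep Y t
  | adec {t : Term} {k : ℕ} : Term.aenc t (.pk (.name k)) ∈ Y → Term.name k ∈ Y → RuleStep Y t
  | pkR {k : ℕ} : Term.name k ∈ Y → RuleStep Y (.pk (.name k))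
  | pairR {u v : Term} : u ∈ Y → v ∈ Y → RuleStep Y (.pair u v)
  | sencR {u v : Term} : u ∈ Y → v ∈ Y → RuleStep Y (.senc u v)
  | aencR {u : Term} {k : ℕ} : u ∈ Y → Term.pk (.name k) ∈ Y → RuleStep Y (.aenc u (.pk (.name k)))
  | xorR {l : List Term} : (∀ s ∈ l, s ∈ Y) → RuleStep Y (nf (.xor l))

/-- `one-step(Y)` relative to the ambient set `st`. -/
def oneStep (st : Set Term) (Y : Set Term) : Set Term :=
  Y ∪ {u ∈ st | RuleStep Y u}

/-- Relabel every node of a proof tree by applying `g` to its term. -/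
def mapTree (g : Term → Term) : PTree → PTree
  | .node t r l => .node (g t) r (l.attach.map fun d => mapTree g d.1)
decreasing_by
  have := List.sizeOf_lt_of_mem d.2
  simp only [PTree.node.sizeOf_spec]
  omega

attribute [local instance] Classical.propDecidable

/-- `zap` relative to a set `T` of terms (to be instantiated with `nf(Dσ)`):
`zap(a) = a` for atomic `a`; `zap(t) = 0` for zappable `t` (a non-atomic
standard term with `nf(t) ∉ T`); otherwise `zap` is applied to the arguments
and the result is normalized. -/
noncomputable def zap (T : Set Term) : Term → Term
  | .var x => .var x
  | .name a => .name a
  | .pk u => if nf (.pk u) ∈ T then nf (.pk (zap T u)) else Term.zero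
  | .pair u v => if nf (.pair u v) ∈ T then nf (.pair (zap T u) (zap T v)) else Term.zero
  | .senc u v => if nf (.senc u v) ∈ T then nf (.senc (zap T u) (zap T v)) else Term.zero
  | .aenc u v => if nf (.aenc u v) ∈ T then nf (.aenc (zap T u) (zap T v)) else Term.zero
  | .xor M => nf (.xor (M.attach.map fun u => zap T u.1))
decreasing_by
  all_goals first
  | (have := List.sizeOf_lt_of_mem u.2; simp only [Term.xor.sizeOf_spec]; omega)
  | (simp only [Term.pk.sizeOf_spec, Term.pair.sizeOf_spec, Term.senc.sizeOf_spec,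
      Term.aenc.sizeOf_spec]; omega)

/-- A proof is typed if each of its subproofs either ends in a constructor
rule, or has a typed conclusion (a member of `T = nf(Dσ)`), or has a
non-standard conclusion. -/
def TypedProof (T : Set Term) (π : PTree) : Prop :=
  ∀ δ : PTree, Subproof δ π → δ.rule.IsConstructor ∨ δ.conc ∈ T ∨ ¬ δ.conc.IsStandard

/-- A role: initial knowledge together with a sequence of (receive, send) pairs. -/
structure Role : Type where
  know : Set Term
  seq : List (Term × Term)

/-- The variables of a list of (receive, send) pairs. -/
def varsRS (ρ : List (Term × Term)) : Set ℕ :=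
  {x | ∃ p ∈ ρ, Subterm (.var x) p.1 ∨ Subterm (.var x) p.2}

/-- The agent variables of a role sequence: the variables that first occur in
a send, i.e. `⋃_i (vars(s_i) \ vars({r_1, …, r_i}))`. -/
def varsA (ρ : List (Term × Term)) : Set ℕ :=
  {x | ∃ i : Fin ρ.length, Subterm (.var x) (ρ.get i).2 ∧
        ∀ j : Fin ρ.length, j.1 ≤ i.1 → ¬ Subterm (.var x) (ρ.get j).1}

/-- The intruder variables of a role sequence. -/
def varsI (ρ : List (Term × Term)) : Set ℕ := varsRS ρ \ varsA ρ

/-- Well-formed roles: the initial knowledge is a finite set of standard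
normalized terms whose variables are agent variables, and every send is
derivable from the initial knowledge together with the receives up to that
point. -/
def Role.WF (R : Role) : Prop :=
  R.know.Finite ∧
  (∀ t ∈ R.know, t.IsStandard ∧ nf t = t) ∧
  (∀ t ∈ R.know, ∀ x : ℕ, Subterm (.var x) t → x ∈ varsA R.seq) ∧
  ∀ i : Fin R.seq.length,
    Derives (R.know ∪ {u | ∃ j : Fin R.seq.length, j.1 ≤ i.1 ∧ u = (R.seq.get j).1})
      (R.seq.get i).2

/-- A protocol: the intruder's initial knowledge and a finite list of roles. -/
structure Protocol : Type where
  init : Set Term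
  roles : List Role

/-- Well-formed protocols: the initial knowledge is a finite set of normalized
ground terms, and all roles are well-formed. -/
def Protocol.WF (P : Protocol) : Prop :=
  P.init.Finite ∧ (∀ t ∈ P.init, nf t = t ∧ Ground t) ∧ ∀ R ∈ P.roles, R.WF

/-- The instantiation `ρτ` of a role sequence by a substitution. -/
def instSeq (R : Role) (τ : ℕ → Term) : List (Term × Term) :=
  R.seq.map fun p => (subst τ p.1, subst τ p.2)

/-- A session of a protocol: a role together with a substitution sending agent
variables to names and intruder variables to variables, with the instantiated
sequence consisting of normalized terms. -/
def IsSession (P : Protocol) (R : Role) (τ : ℕ → Term) : Prop :=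
  R ∈ P.roles ∧
  (∀ x ∈ varsA R.seq, ∃ a : ℕ, τ x = .name a) ∧
  (∀ x ∈ varsI R.seq, ∃ y : ℕ, τ x = .var y) ∧
  (∀ p ∈ instSeq R τ, nf p.1 = p.1 ∧ nf p.2 = p.2)

/-- Two sessions are coherent if their instantiated sequences share no variables. -/
def Coherent (s₁ s₂ : Role × (ℕ → Term)) : Prop :=
  ∀ x : ℕ, ¬ (x ∈ varsRS (instSeq s₁.1 s₁.2) ∧ x ∈ varsRS (instSeq s₂.1 s₂.2))

/-- `Interleave ls l`: `l` is an interleaving of the lists in `ls`. -/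
inductive Interleave {α : Type} : List (List α) → List α → Prop where
  | nil {ls : List (List α)} : (∀ l ∈ ls, l = []) → Interleave ls []
  | cons {ls : List (List α)} {i : Fin ls.length} {x : α} {xs ys : List α} :
      ls.get i = x :: xs → Interleave (ls.set i xs) ys → Interleave ls (x :: ys)

/-- The set `X_i` of a run: the initial knowledge `X₀` together with the first
`i` sent messages of `ξ`. -/
def runKnow (P : Protocol) (ξ : List (Term × Term)) (i : ℕ) : Set Term :=
  P.init ∪ {u | ∃ j : Fin ξ.length, j.1 < i ∧ u = (ξ.get j).2}

/-- `nf(Xσ) = {nf(tσ) : t ∈ X}`. -/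
def nfSubst (σ : ℕ → Term) (X : Set Term) : Set Term :=
  {u | ∃ t ∈ X, u = nf (subst σ t)}

/-- `(ξ, σ)` is a run generated by the pairwise coherent sessions `S` of `P`:
`ξ` is a prefix of an interleaving of the instantiated role sequences, `σ` is
a normalized ground substitution with domain `vars(ξ)`, and each received
message is derivable (after substitution and normalization) from the initial
knowledge together with the previously sent messages. -/
def IsRun (P : Protocol) (S : List (Role × (ℕ → Term)))
    (ξ : List (Term × Term)) (σ : ℕ → Term) : Prop :=
  (∀ s ∈ S, IsSession P s.1 s.2) ∧
  S.Pairwise Coherent ∧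
  (∃ full : List (Term × Term),
      Interleave (S.map fun s => instSeq s.1 s.2) full ∧ ξ.IsPrefix full) ∧
  (∀ x ∈ varsRS ξ, Ground (σ x) ∧ nf (σ x) = σ x) ∧
  (∀ x : ℕ, x ∉ varsRS ξ → σ x = .var x) ∧
  ∀ j : Fin ξ.length,
    Derives (nfSubst σ (runKnow P ξ j.1)) (nf (subst σ (ξ.get j).1))

/-- The set `C` associated with a run: all subterms of the initial knowledge,
the instantiated role knowledges, the messages of the run, and `secret`. -/
def Cset (P : Protocol) (S : List (Role × (ℕ → Term)))
    (ξ : List (Term × Term)) : Set Term :=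
  stSet (P.init ∪ {u | ∃ s ∈ S, ∃ t ∈ s.1.know, u = subst s.2 t} ∪
    {u | ∃ p ∈ ξ, u = p.1 ∨ u = p.2} ∪ {Term.secret})

/-- The set `D ⊆ C` of standard non-variable members of `C`. -/
def Dset (P : Protocol) (S : List (Role × (ℕ → Term)))
    (ξ : List (Term × Term)) : Set Term :=
  {t ∈ Cset P S ξ | t.IsStandard ∧ ∀ x : ℕ, t ≠ .var x}

/-- `nf(Dσ)`: a standard normalized term is *typed* iff it belongs to this set. -/
def TypedSet (P : Protocol) (S : List (Role × (ℕ → Term)))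
    (ξ : List (Term × Term)) (σ : ℕ → Term) : Set Term :=
  nfSubst σ (Dset P S ξ)

/-- `(ξ, σ)` is an attack: a run after which the intruder derives `secret`. -/
def IsAttack (P : Protocol) (S : List (Role × (ℕ → Term)))
    (ξ : List (Term × Term)) (σ : ℕ → Term) : Prop :=
  IsRun P S ξ σ ∧ Derives (nfSubst σ (runKnow P ξ ξ.length)) Term.secret

/-- `P` has a `K`-bounded attack. -/
def HasBoundedAttack (K : ℕ) (P : Protocol) : Prop :=
  ∃ (S : List (Role × (ℕ → Term))) (ξ : List (Term × Term)) (σ : ℕ → Term),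
    S.length = K ∧ IsAttack P S ξ σ


/-! ### Stage 1: encode, facL, sort, cancel -/

theorem encode_eq (t : Term) : encode t = match t with
  | .var x => Nat.pair 0 x + 1
  | .name a => Nat.pair 1 a + 1
  | .pk u => Nat.pair 2 (encode u) + 1
  | .pair u v => Nat.pair 3 (Nat.pair (encode u) (encode v)) + 1
  | .senc u v => Nat.pair 4 (Nat.pair (encode u) (encode v)) + 1
  | .aenc u v => Nat.pair 5 (Nat.pair (encode u) (encode v)) + 1
  | .xor M => Nat.pair 6 ((M.map encode).foldr (fun a b => Nat.pair a b + 1) 0) + 1 := by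
  cases t <;> rw [encode] <;> simp [List.attach_map_val]

theorem encode_inj : ∀ {s t : Term}, encode s = encode t → s = t := by
  have key : ∀ n, ∀ s t : Term, sizeOf s ≤ n → encode s = encode t → s = t := by
    intro n
    induction n with
    | zero => intro s; cases s <;> simp
    | succ n ih =>
      have key2 : ∀ M N : List Term, (∀ a ∈ M, sizeOf a ≤ n) →
          (M.map encode).foldr (fun a b => Nat.pair a b + 1) 0 =
          (N.map encode).foldr (fun a b => Nat.pair a b + 1) 0 → M = N := by
        intro M
        induction M with
        | nil => intro N _ h2; cases N with
          | nil => rfl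
          | cons b N => simp at h2
        | cons a M ihM =>
          intro N hsz h2
          cases N with
          | nil => simp at h2
          | cons b N =>
            simp only [List.map_cons, List.foldr_cons, Nat.succ_inj, Nat.pair_eq_pair] at h2
            have ha : a = b := ih a b (hsz a (by simp)) h2.1
            have hM : M = N := ihM N (fun x hx => hsz x (by simp [hx])) h2.2
            simp [ha, hM]
      intro s t hs h
      rw [encode_eq s, encode_eq t] at h
      have h' := h
      cases s <;> cases t <;>
        simp only [Nat.succ_inj, Nat.pair_eq_pair] at h' <;> try omega
      case var.var => simp_all
      case name.name => simp_all
      case pk.pk u v =>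
        have : u = v := ih u v (by simp at hs ⊢; omega) h'.2
        simp [this]
      case pair.pair a b c d =>
        have h3 : a = c := ih a c (by simp at hs ⊢; omega) h'.2.1
        have h4 : b = d := ih b d (by simp at hs ⊢; omega) h'.2.2
        simp [h3, h4]
      case senc.senc a b c d =>
        have h3 : a = c := ih a c (by simp at hs ⊢; omega) h'.2.1
        have h4 : b = d := ih b d (by simp at hs ⊢; omega) h'.2.2
        simp [h3, h4]
      case aenc.aenc a b c d =>
        have h3 : a = c := ih a c (by simp at hs ⊢; omega) h'.2.1
        have h4 : b = d := ih b d (by simp at hs ⊢; omega) h'.2.2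
        simp [h3, h4]
      case xor.xor M N =>
        have hMN : M = N := by
          apply key2 M N ?_ h'.2
          intro a ha
          have h1 := List.sizeOf_lt_of_mem ha
          simp only [Term.xor.sizeOf_spec] at hs
          omega
        simp [hMN]
  intro s t h; exact key (sizeOf s) s t le_rfl h


/-! ### Stage 2: facL, nf equations, red -/

/-- `red L`: the canonical sorted list of odd-multiplicity elements of `L`. -/
def red (L : List Term) : List Term := cancel (sortT L)

/-- `nfac t`: the multiset (list) of normalized factors of `t`. -/
def nfac (t : Term) : List Term := (facL t).map nf

theorem std_var (x : ℕ) : (Term.var x).IsStandard := trivial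
theorem std_name (a : ℕ) : (Term.name a).IsStandard := trivial
theorem std_pk (u : Term) : (Term.pk u).IsStandard := trivial
theorem std_pair (u v : Term) : (Term.pair u v).IsStandard := trivial
theorem std_senc (u v : Term) : (Term.senc u v).IsStandard := trivial
theorem std_aenc (u v : Term) : (Term.aenc u v).IsStandard := trivial
theorem not_std_xor (M : List Term) : ¬ (Term.xor M).IsStandard := fun h => h

theorem facL_var (x : ℕ) : facL (Term.var x) = [Term.var x] := by rw [facL]
theorem facL_name (a : ℕ) : facL (Term.name a) = [Term.name a] := by rw [facL]
theorem facL_xor (M : List Term) : facL (Term.xor M) = M.flatMap facL := by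
  rw [facL]; simp [List.attach_map_val]

theorem facL_std {t : Term} (h : t.IsStandard) : facL t = [t] := by
  cases t with
  | xor M => exact absurd h (not_std_xor M)
  | var x => rw [facL]
  | name a => rw [facL]
  | pk u => rw [facL]
  | pair u v => rw [facL]
  | senc u v => rw [facL]
  | aenc u v => rw [facL]

theorem facL_standard : ∀ (t : Term), ∀ u ∈ facL t, u.IsStandard := by
  have key : ∀ n, ∀ t : Term, sizeOf t ≤ n → ∀ u ∈ facL t, u.IsStandard := by
    intro n
    induction n with
    | zero => intro t; cases t <;> simp
    | succ n ih =>
      intro t ht u hu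
      cases t with
      | xor M =>
        rw [facL_xor] at hu
        simp only [List.mem_flatMap] at hu
        obtain ⟨m, hm, hu⟩ := hu
        have h1 := List.sizeOf_lt_of_mem hm
        simp only [Term.xor.sizeOf_spec] at ht
        exact ih m (by omega) u hu
      | var x => rw [facL_var] at hu; simp at hu; subst hu; exact std_var x
      | name a => rw [facL_name] at hu; simp at hu; subst hu; exact std_name a
      | pk v => rw [facL_std (std_pk v)] at hu; simp at hu; subst hu; exact std_pk v
      | pair v w => rw [facL_std (std_pair v w)] at hu; simp at hu; subst hu; exact std_pair v w
      | senc v w => rw [facL_std (std_senc v w)] at hu; simp at hu; subst hu; exact std_senc v w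
      | aenc v w => rw [facL_std (std_aenc v w)] at hu; simp at hu; subst hu; exact std_aenc v w
  exact fun t => key (sizeOf t) t le_rfl

@[simp] theorem nf_var (x : ℕ) : nf (Term.var x) = Term.var x := by rw [nf]
@[simp] theorem nf_name (a : ℕ) : nf (Term.name a) = Term.name a := by rw [nf]
@[simp] theorem nf_pk (u : Term) : nf (Term.pk u) = Term.pk (nf u) := by rw [nf]
@[simp] theorem nf_pair (u v : Term) : nf (Term.pair u v) = Term.pair (nf u) (nf v) := by rw [nf]
@[simp] theorem nf_senc (u v : Term) : nf (Term.senc u v) = Term.senc (nf u) (nf v) := by rw [nf]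
@[simp] theorem nf_aenc (u v : Term) : nf (Term.aenc u v) = Term.aenc (nf u) (nf v) := by rw [nf]

theorem nf_zero : nf Term.zero = Term.zero := nf_name 0

theorem nf_standard {t : Term} (h : t.IsStandard) : (nf t).IsStandard := by
  cases t <;> first
    | exact absurd h (not_std_xor _)
    | (simp only [nf_var, nf_name, nf_pk, nf_pair, nf_senc, nf_aenc]; trivial)

theorem nf_xor_eq (M : List Term) :
    nf (Term.xor M) = xorOf (red (nfac (Term.xor M))) := by
  rw [nf]
  congr 1
  unfold red nfac sortT
  congr 1
  rw [List.attach_map_val (l := facL (Term.xor M)) (f := nf)]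

/-- Master formula: `nf t = xorOf (red (nfac t))` for every `t`. -/
theorem nf_eq_xorOf_red (t : Term) : nf t = xorOf (red (nfac t)) := by
  cases t with
  | xor M => exact nf_xor_eq M
  | _ =>
    rw [nfac, facL_std (by trivial)]
    simp only [List.map_cons, List.map_nil]
    rw [red]
    show _ = xorOf (cancel (List.mergeSort _ _))
    rw [List.mergeSort]
    rfl

/-- Sortedness w.r.t. the encoding. -/
def SortedE (L : List Term) : Prop := List.Pairwise (fun a b => encode a ≤ encode b) L

theorem sortT_perm (L : List Term) : (sortT L).Perm L := List.mergeSort_perm L _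

theorem sortT_sorted (L : List Term) : SortedE (sortT L) := by
  have h := List.pairwise_mergeSort (le := fun a b : Term => Nat.ble (encode a) (encode b))
    (fun a b c hab hbc => by simp only [Nat.ble_eq] at *; omega)
    (fun a b => by simp only [Bool.or_eq_true, Nat.ble_eq]; omega) L
  exact h.imp (fun hab => by simpa [Nat.ble_eq] using hab)

theorem count_sortT (L : List Term) (a : Term) : (sortT L).count a = L.count a :=
  (sortT_perm L).count_eq a

theorem cancel_spec : ∀ (S : List Term), SortedE S →
    SortedE (cancel S) ∧ (cancel S).Nodup ∧
      (∀ a, a ∈ cancel S ↔ ¬ (S.count a % 2 = 0))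
  | [] => by intro _; refine ⟨by constructor, by constructor, ?_⟩; simp [cancel]
  | [a] => by
    intro _
    rw [cancel]
    refine ⟨List.pairwise_singleton _ _, List.nodup_singleton _, fun x => ?_⟩
    constructor
    · intro hx
      simp only [List.mem_singleton] at hx
      subst hx
      have : List.count x [x] = 1 := by simp
      omega
    · intro hx
      by_cases h : x = a
      · simp [h]
      · exfalso
        apply hx
        rw [List.count_eq_zero.mpr (by simp [h])]
  | a :: b :: rest => by
    intro h
    by_cases hab : encode a = encode b
    · have hab' : a = b := encode_inj hab
      subst hab'
      rw [cancel, if_pos rfl]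
      obtain ⟨hs, hn, hm⟩ := cancel_spec rest (h.of_cons.of_cons)
      refine ⟨hs, hn, fun x => ?_⟩
      rw [hm x]
      have hcnt : (a :: a :: rest).count x = rest.count x + (if a = x then 2 else 0) := by
        simp only [List.count_cons, beq_iff_eq]
        by_cases hx : a = x
        · simp [hx]
        · simp [hx]
      rw [hcnt]
      by_cases hx : a = x
      · rw [if_pos hx]; omega
      · rw [if_neg hx]; omega
    · have hab' : a ≠ b := fun e => hab (e ▸ rfl)
      rw [cancel, if_neg hab]
      obtain ⟨hs, hn, hm⟩ := cancel_spec (b :: rest) h.of_cons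
      have hhead := (List.pairwise_cons.mp h).1
      have hbrest := (List.pairwise_cons.mp h.of_cons).1
      have hanotin : a ∉ b :: rest := by
        intro hmem
        rcases List.mem_cons.mp hmem with h1 | h1
        · exact hab' h1
        · have h2 := hbrest a h1
          have h3 := hhead b (by simp)
          exact hab (le_antisymm h3 h2)
      have hacount : (b :: rest).count a = 0 := List.count_eq_zero.mpr hanotin
      have hsubmem : ∀ x ∈ cancel (b :: rest), x ∈ b :: rest := by
        intro x hx
        have := (hm x).mp hx
        have hpos : 0 < (b :: rest).count x := by omega
        exact List.count_pos_iff.mp hpos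
      refine ⟨?_, ?_, ?_⟩
      · exact List.pairwise_cons.mpr ⟨fun x hx => hhead x (hsubmem x hx), hs⟩
      · exact List.nodup_cons.mpr ⟨fun hx => by
          have := (hm a).mp hx; omega, hn⟩
      · intro x
        by_cases hx : x = a
        · subst hx
          have h1 : (x :: b :: rest).count x = 1 := by
            simp [List.count_cons, hacount]
          rw [h1]
          simp
        · have h1 : (a :: b :: rest).count x = (b :: rest).count x := by
            simp only [List.count_cons, beq_iff_eq]
            rw [if_neg (fun e : a = x => hx e.symm)]
            ring
          rw [h1]
          simp only [List.mem_cons, hx, false_or]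
          exact hm x

theorem red_sorted (L : List Term) : SortedE (red L) := (cancel_spec _ (sortT_sorted L)).1
theorem red_nodup (L : List Term) : (red L).Nodup := (cancel_spec _ (sortT_sorted L)).2.1
theorem red_mem {L : List Term} {a : Term} : a ∈ red L ↔ ¬ (L.count a % 2 = 0) := by
  rw [red, (cancel_spec _ (sortT_sorted L)).2.2 a, count_sortT]

theorem red_subset {L : List Term} {a : Term} (h : a ∈ red L) : a ∈ L := by
  have := red_mem.mp h
  have hpos : 0 < L.count a := by omega
  exact List.count_pos_iff.mp hpos

theorem red_count_parity (L : List Term) (a : Term) :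
    (red L).count a % 2 = L.count a % 2 := by
  by_cases h : a ∈ red L
  · rw [List.count_eq_one_of_mem (red_nodup L) h]
    have := red_mem.mp h
    omega
  · rw [List.count_eq_zero.mpr h]
    have := red_mem (L := L) (a := a)
    by_cases h2 : L.count a % 2 = 0
    · omega
    · exact absurd (this.mpr h2) h

instance : IsAntisymm Term (fun a b => encode a ≤ encode b) :=
  ⟨fun _ _ h1 h2 => encode_inj (le_antisymm h1 h2)⟩

theorem sortedE_eq {l₁ l₂ : List Term} (hp : l₁.Perm l₂) (h₁ : SortedE l₁) (h₂ : SortedE l₂) :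
    l₁ = l₂ :=
  List.Perm.eq_of_pairwise (fun _ _ _ _ h1 h2 => encode_inj (le_antisymm h1 h2)) h₁ h₂ hp

/-- parity-equal lists have the same `red`. -/
theorem red_eq_of_parity {L₁ L₂ : List Term}
    (h : ∀ a, L₁.count a % 2 = L₂.count a % 2) : red L₁ = red L₂ := by
  apply sortedE_eq ?_ (red_sorted L₁) (red_sorted L₂)
  rw [List.perm_ext_iff_of_nodup (red_nodup L₁) (red_nodup L₂)]
  intro a
  rw [red_mem, red_mem, h a]

theorem red_self {c : List Term} (hs : SortedE c) (hn : c.Nodup) : red c = c := by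
  apply sortedE_eq ?_ (red_sorted c) hs
  rw [List.perm_ext_iff_of_nodup (red_nodup c) hn]
  intro a
  rw [red_mem]
  constructor
  · intro h; have : 0 < c.count a := by omega
    exact List.count_pos_iff.mp this
  · intro h; rw [List.count_eq_one_of_mem hn h]; omega

theorem red_singleton (x : Term) : red [x] = [x] :=
  red_self (List.pairwise_singleton _ _) (List.nodup_singleton _)

theorem red_nil_iff {L : List Term} : red L = [] ↔ ∀ a, L.count a % 2 = 0 := by
  constructor
  · intro h a
    have := red_count_parity L a
    rw [h] at this
    simpa using this.symm
  · intro h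
    rw [List.eq_nil_iff_forall_not_mem]
    intro a ha
    exact (red_mem.mp ha) (h a)

/-! ### Stage 3: xorOf, nfac, nf_nf -/

theorem xorOf_nil : xorOf [] = Term.zero := rfl
theorem xorOf_singleton (t : Term) : xorOf [t] = t := rfl
theorem xorOf_cons_cons (a b : Term) (l : List Term) :
    xorOf (a :: b :: l) = Term.xor (a :: b :: l) := rfl

theorem flatMap_id' : ∀ (l : List Term) (f : Term → List Term),
    (∀ x ∈ l, f x = [x]) → l.flatMap f = l := by
  intro l f h
  induction l with
  | nil => rfl
  | cons a t ih =>
    rw [List.flatMap_cons, h a (by simp), ih (fun x hx => h x (by simp [hx]))]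
    rfl

theorem nfac_std {t : Term} (h : t.IsStandard) : nfac t = [nf t] := by
  rw [nfac, facL_std h]; rfl

theorem nfac_xor (M : List Term) : nfac (Term.xor M) = M.flatMap nfac := by
  rw [nfac, facL_xor, List.map_flatMap]; rfl

theorem mem_nfac {t u : Term} (h : u ∈ nfac t) : ∃ f ∈ facL t, u = nf f := by
  rw [nfac] at h
  simp only [List.mem_map] at h
  obtain ⟨f, hf, he⟩ := h
  exact ⟨f, hf, he.symm⟩

theorem mem_nfac_std {t u : Term} (h : u ∈ nfac t) : u.IsStandard := by
  obtain ⟨f, hf, he⟩ := mem_nfac h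
  exact he ▸ nf_standard (facL_standard t f hf)

theorem nf_nf : ∀ (t : Term), nf (nf t) = nf t := by
  have key : ∀ n, ∀ t : Term, sizeOf t ≤ n → nf (nf t) = nf t := by
    intro n
    induction n with
    | zero => intro t; cases t <;> simp
    | succ n ih =>
      intro t ht
      cases t with
      | var x => simp
      | name a => simp
      | pk u => simp only [nf_pk]; rw [ih u (by simp at ht ⊢; omega)]
      | pair u v => simp only [nf_pair]
                    rw [ih u (by simp at ht ⊢; omega), ih v (by simp at ht ⊢; omega)]
      | senc u v => simp only [nf_senc]
                    rw [ih u (by simp at ht ⊢; omega), ih v (by simp at ht ⊢; omega)]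
      | aenc u v => simp only [nf_aenc]
                    rw [ih u (by simp at ht ⊢; omega), ih v (by simp at ht ⊢; omega)]
      | xor M =>
        have helts : ∀ a ∈ red (nfac (Term.xor M)), nf a = a ∧ a.IsStandard := by
          intro a ha
          have hmem := red_subset ha
          obtain ⟨f, hf, he⟩ := mem_nfac hmem
          have hsz := sizeOf_lt_of_mem_facL_xor M f hf
          simp only [Term.xor.sizeOf_spec] at ht hsz
          constructor
          · rw [he]; exact ih f (by omega)
          · exact he ▸ nf_standard (facL_standard _ f hf)
        rw [nf_xor_eq]
        rcases hm : red (nfac (Term.xor M)) with - | ⟨a, - | ⟨b, cs⟩⟩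
        · exact nf_zero
        · exact (helts a (by rw [hm]; simp)).1
        · rw [xorOf_cons_cons]
          have hall : ∀ x ∈ a :: b :: cs, nf x = x ∧ x.IsStandard := by
            intro x hx; exact helts x (by rw [hm]; exact hx)
          rw [nf_xor_eq]
          have h1 : nfac (Term.xor (a :: b :: cs)) = a :: b :: cs := by
            rw [nfac_xor]
            apply flatMap_id'
            intro x hx
            rw [nfac_std (hall x hx).2, (hall x hx).1]
          rw [h1, red_self (hm ▸ red_sorted (nfac (Term.xor M)))
            (hm ▸ red_nodup (nfac (Term.xor M))), xorOf_cons_cons]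
  exact fun t => key (sizeOf t) t le_rfl


/-! ### Stage 4: more red/nfac facts, parity sums -/

theorem mem_red_nfac {t w : Term} (h : w ∈ red (nfac t)) : w.IsStandard ∧ nf w = w := by
  have hmem := red_subset h
  obtain ⟨f, hf, he⟩ := mem_nfac hmem
  exact ⟨mem_nfac_std hmem, he ▸ nf_nf f⟩

theorem nf_eq_of_parity {s₁ s₂ : Term}
    (h : ∀ a, (nfac s₁).count a % 2 = (nfac s₂).count a % 2) : nf s₁ = nf s₂ := by
  rw [nf_eq_xorOf_red, nf_eq_xorOf_red, red_eq_of_parity h]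

/-- When the reduced factor list is nonempty, `nfac (nf t) = red (nfac t)`. -/
theorem nfac_nf {t : Term} (h : red (nfac t) ≠ []) : nfac (nf t) = red (nfac t) := by
  rw [nf_eq_xorOf_red]
  rcases hm : red (nfac t) with - | ⟨a, - | ⟨b, cs⟩⟩
  · exact absurd hm h
  · rw [xorOf_singleton]
    have := mem_red_nfac (t := t) (w := a) (by rw [hm]; simp)
    rw [nfac_std this.1, this.2]
  · rw [xorOf_cons_cons, nfac_xor]
    apply flatMap_id'
    intro x hx
    have := mem_red_nfac (t := t) (w := x) (by rw [hm]; exact hx)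
    rw [nfac_std this.1, this.2]

theorem nfac_nf_parity {t : Term} (h : red (nfac t) ≠ []) (a : Term) :
    (nfac (nf t)).count a % 2 = (nfac t).count a % 2 := by
  rw [nfac_nf h, red_count_parity]

theorem nfac_zero : nfac Term.zero = [Term.zero] := by
  rw [show Term.zero = Term.name 0 from rfl, nfac_std (std_name 0), nf_name]

theorem red_nfac_nil_nf {t : Term} (h : red (nfac t) = []) : nf t = Term.zero := by
  rw [nf_eq_xorOf_red, h, xorOf_nil]

/-- sum of `g` over a list with all-even multiplicities is even -/
theorem evensum (g : Term → ℕ) :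
    ∀ n (K : List Term), K.length ≤ n → (∀ a, K.count a % 2 = 0) →
      (K.map g).sum % 2 = 0 := by
  intro n
  induction n with
  | zero =>
    intro K hK _
    have hnil : K = [] := List.length_eq_zero_iff.mp (by omega)
    subst hnil; rfl
  | succ n ih =>
    intro K hK hcnt
    cases K with
    | nil => rfl
    | cons a T =>
      have h2 : T.count a ≥ 1 := by
        have h1' := hcnt a
        rw [List.count_cons] at h1'
        simp only [beq_self_eq_true, if_true] at h1'
        omega
      have hmem : a ∈ T := List.count_pos_iff.mp (by omega)
      have hperm : T.Perm (a :: T.erase a) := List.perm_cons_erase hmem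
      have hsum : (T.map g).sum = g a + ((T.erase a).map g).sum := by
        rw [(hperm.map g).sum_eq]; rfl
      have hlen : (T.erase a).length ≤ n := by
        have := List.length_erase_of_mem hmem
        simp at hK
        omega
      have hcnt' : ∀ x, (T.erase a).count x % 2 = 0 := by
        intro x
        rw [List.count_erase]
        have hx := hcnt x
        rw [List.count_cons] at hx
        by_cases hxa : x = a
        · subst hxa; simp only [beq_self_eq_true, if_true] at hx ⊢; omega
        · have hf : (a == x) = false := by
            simp only [beq_eq_false_iff_ne, ne_eq]
            exact fun e => hxa e.symm
          simp only [hf, Bool.false_eq_true, if_false] at hx ⊢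
          omega
      have := ih (T.erase a) hlen hcnt'
      simp only [List.map_cons, List.sum_cons, hsum]
      omega

/-- parity-equal lists have parity-equal `g`-sums -/
theorem pesum (g : Term → ℕ) :
    ∀ n (K₁ K₂ : List Term), K₁.length ≤ n →
      (∀ a, K₁.count a % 2 = K₂.count a % 2) →
      (K₁.map g).sum % 2 = (K₂.map g).sum % 2 := by
  intro n
  induction n with
  | zero =>
    intro K₁ K₂ hK h
    have hnil : K₁ = [] := List.length_eq_zero_iff.mp (by omega)
    subst hnil
    have hev : ∀ a, K₂.count a % 2 = 0 := by
      intro a; have := h a; simpa using this.symm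
    have := evensum g K₂.length K₂ le_rfl hev
    simpa using this.symm
  | succ n ih =>
    intro K₁ K₂ hK h
    cases K₁ with
    | nil =>
      have hev : ∀ a, K₂.count a % 2 = 0 := by
        intro a; have := h a; simpa using this.symm
      have := evensum g K₂.length K₂ le_rfl hev
      simpa using this.symm
    | cons a T =>
      by_cases hmem : a ∈ K₂
      · have hperm : K₂.Perm (a :: K₂.erase a) := List.perm_cons_erase hmem
        have hsum2 : (K₂.map g).sum = g a + ((K₂.erase a).map g).sum := by
          rw [(hperm.map g).sum_eq]; rfl
        have hpe : ∀ x, T.count x % 2 = (K₂.erase a).count x % 2 := by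
          intro x
          have hx := h x
          rw [List.count_cons] at hx
          rw [List.count_erase]
          by_cases hxa : x = a
          · subst hxa
            simp only [beq_self_eq_true, if_true] at hx ⊢
            have h2 : K₂.count x ≥ 1 := List.count_pos_iff.mpr hmem
            omega
          · have hf : (a == x) = false := by
              simp only [beq_eq_false_iff_ne, ne_eq]
              exact fun e => hxa e.symm
            simp only [hf, Bool.false_eq_true, if_false] at hx ⊢
            omega
        have := ih T (K₂.erase a) (by simp at hK; omega) hpe
        simp only [List.map_cons, List.sum_cons, hsum2]
        omega
      · have hcnt2 : K₂.count a = 0 := List.count_eq_zero.mpr hmem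
        have hx := h a
        rw [List.count_cons, hcnt2] at hx
        simp only [beq_self_eq_true, if_true] at hx
        have hTa : T.count a ≥ 1 := by omega
        have hmemT : a ∈ T := List.count_pos_iff.mp (by omega)
        have hperm : T.Perm (a :: T.erase a) := List.perm_cons_erase hmemT
        have hsum : (T.map g).sum = g a + ((T.erase a).map g).sum := by
          rw [(hperm.map g).sum_eq]; rfl
        have hpe : ∀ x, (T.erase a).count x % 2 = K₂.count x % 2 := by
          intro x
          have hx2 := h x
          rw [List.count_cons] at hx2
          rw [List.count_erase]
          by_cases hxa : x = a
          · subst hxa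
            simp only [beq_self_eq_true, if_true] at hx2 ⊢
            omega
          · have hf : (a == x) = false := by
              simp only [beq_eq_false_iff_ne, ne_eq]
              exact fun e => hxa e.symm
            simp only [hf, Bool.false_eq_true, if_false] at hx2 ⊢
            omega
        have hlen : (T.erase a).length ≤ n := by
          have := List.length_erase_of_mem hmemT
          simp at hK
          omega
        have := ih (T.erase a) K₂ hlen hpe
        simp only [List.map_cons, List.sum_cons, hsum]
        omega


/-! ### Stage 5: IsFactor, Subterm, subst -/

theorem isFactor_standard {w m : Term} (h : IsFactor w m) : w.IsStandard := by
  induction h with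
  | std h => exact h
  | xor _ _ ih => exact ih

theorem isFactor_std_iff {w m : Term} (hm : m.IsStandard) : IsFactor w m ↔ w = m := by
  constructor
  · intro h
    cases h with
    | std _ => rfl
    | xor _ _ => exact absurd hm (not_std_xor _)
  · intro h; subst h; exact IsFactor.std hm

theorem isFactor_xor_elim {w : Term} {M : List Term} (h : IsFactor w (Term.xor M)) :
    ∃ u ∈ M, IsFactor w u := by
  cases h with
  | std h => exact absurd h (not_std_xor M)
  | xor hu hf => exact ⟨_, hu, hf⟩

theorem subterm_of_isFactor {w m : Term} (h : IsFactor w m) : Subterm w m := by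
  induction h with
  | std _ => exact Subterm.refl _
  | xor hu hf ih =>
    exact Subterm.xor (IsFactor.xor hu hf) (Subterm.refl _)

theorem subterm_trans {a b c : Term} (h1 : Subterm a b) (h2 : Subterm b c) : Subterm a c := by
  induction h2 with
  | refl => exact h1
  | pk _ ih => exact Subterm.pk ih
  | pair_l _ ih => exact Subterm.pair_l ih
  | pair_r _ ih => exact Subterm.pair_r ih
  | senc_l _ ih => exact Subterm.senc_l ih
  | senc_r _ ih => exact Subterm.senc_r ih
  | aenc_l _ ih => exact Subterm.aenc_l ih
  | aenc_r _ ih => exact Subterm.aenc_r ih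
  | xor hf _ ih => exact Subterm.xor hf ih

theorem isFactor_of_mem_red {t w : Term} (h : w ∈ red (nfac t)) : IsFactor w (nf t) := by
  have hstd := (mem_red_nfac h).1
  rw [nf_eq_xorOf_red]
  rcases hm : red (nfac t) with - | ⟨a, - | ⟨b, cs⟩⟩
  · rw [hm] at h; simp at h
  · rw [hm] at h; simp at h; subst h; exact IsFactor.std hstd
  · rw [hm] at h
    rw [xorOf_cons_cons]
    exact IsFactor.xor h (IsFactor.std hstd)

theorem mem_red_of_isFactor_nf {t w : Term} (h : IsFactor w (nf t)) (hw : w ≠ Term.zero) :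
    w ∈ red (nfac t) := by
  rw [nf_eq_xorOf_red] at h
  rcases hm : red (nfac t) with - | ⟨a, - | ⟨b, cs⟩⟩ <;> rw [hm] at h
  · rw [xorOf_nil] at h
    exact absurd ((isFactor_std_iff (by trivial)).mp h) hw
  · rw [xorOf_singleton] at h
    have ha := mem_red_nfac (t := t) (w := a) (by rw [hm]; simp)
    rw [isFactor_std_iff ha.1] at h
    subst h; simp
  · rw [xorOf_cons_cons] at h
    obtain ⟨u, hu, hf⟩ := isFactor_xor_elim h
    have hu' := mem_red_nfac (t := t) (w := u) (by rw [hm]; exact hu)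
    rw [isFactor_std_iff hu'.1] at hf
    subst hf; exact hu

@[simp] theorem subst_var (σ : ℕ → Term) (x : ℕ) : subst σ (Term.var x) = σ x := by rw [subst]
@[simp] theorem subst_name (σ : ℕ → Term) (a : ℕ) :
    subst σ (Term.name a) = Term.name a := by rw [subst]
@[simp] theorem subst_pk (σ : ℕ → Term) (u : Term) :
    subst σ (Term.pk u) = Term.pk (subst σ u) := by rw [subst]
@[simp] theorem subst_pair (σ : ℕ → Term) (u v : Term) :
    subst σ (Term.pair u v) = Term.pair (subst σ u) (subst σ v) := by rw [subst]
@[simp] theorem subst_senc (σ : ℕ → Term) (u v : Term) :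
    subst σ (Term.senc u v) = Term.senc (subst σ u) (subst σ v) := by rw [subst]
@[simp] theorem subst_aenc (σ : ℕ → Term) (u v : Term) :
    subst σ (Term.aenc u v) = Term.aenc (subst σ u) (subst σ v) := by rw [subst]
theorem subst_xor (σ : ℕ → Term) (M : List Term) :
    subst σ (Term.xor M) = Term.xor (M.map (subst σ)) := by
  rw [subst]; simp [List.attach_map_val]

theorem subst_zero (σ : ℕ → Term) : subst σ Term.zero = Term.zero := subst_name σ 0

/-- `nfac ∘ subst` distributes over the factors. -/
theorem nfac_subst (σ : ℕ → Term) : ∀ (t : Term),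
    nfac (subst σ t) = (facL t).flatMap (fun f => nfac (subst σ f)) := by
  have key : ∀ n, ∀ t : Term, sizeOf t ≤ n →
      nfac (subst σ t) = (facL t).flatMap (fun f => nfac (subst σ f)) := by
    intro n
    induction n with
    | zero => intro t; cases t <;> simp
    | succ n ih =>
      intro t ht
      cases t with
      | xor M =>
        rw [subst_xor, nfac_xor, facL_xor, List.flatMap_assoc]
        rw [List.flatMap_map]
        apply List.flatMap_congr
        intro m hm
        have hsz := List.sizeOf_lt_of_mem hm
        simp only [Term.xor.sizeOf_spec] at ht
        exact ih m (by omega)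
      | _ =>
        rw [facL_std (by trivial), List.flatMap_cons]
        simp
  exact fun t => key (sizeOf t) t le_rfl

theorem count_nfac_subst (σ : ℕ → Term) (t : Term) (x : Term) :
    (nfac (subst σ t)).count x
      = ((facL t).map (fun f => (nfac (subst σ f)).count x)).sum := by
  rw [nfac_subst σ t, List.count_flatMap]
  rfl

/-- Key substitution lemma: `nf (σ (nf t)) = nf (σ t)`. -/
theorem nf_subst_nf (σ : ℕ → Term) : ∀ (t : Term),
    nf (subst σ (nf t)) = nf (subst σ t) := by
  have key : ∀ n, ∀ t : Term, sizeOf t ≤ n → nf (subst σ (nf t)) = nf (subst σ t) := by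
    intro n
    induction n with
    | zero => intro t; cases t <;> simp
    | succ n ih =>
      intro t ht
      cases t with
      | var x => simp
      | name a => simp
      | pk u =>
        simp only [nf_pk, subst_pk]
        rw [ih u (by simp at ht ⊢; omega)]
      | pair u v =>
        simp only [nf_pair, subst_pair]
        rw [ih u (by simp at ht ⊢; omega), ih v (by simp at ht ⊢; omega)]
      | senc u v =>
        simp only [nf_senc, subst_senc]
        rw [ih u (by simp at ht ⊢; omega), ih v (by simp at ht ⊢; omega)]
      | aenc u v =>
        simp only [nf_aenc, subst_aenc]
        rw [ih u (by simp at ht ⊢; omega), ih v (by simp at ht ⊢; omega)]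
      | xor M =>
        simp only [Term.xor.sizeOf_spec] at ht
        -- the per-factor count transfer
        have hfac : ∀ f ∈ facL (Term.xor M), ∀ x,
            (nfac (subst σ f)).count x = (nfac (subst σ (nf f))).count x := by
          intro f hf x
          have hstd := facL_standard _ f hf
          have hsz := sizeOf_lt_of_mem_facL_xor M f hf
          simp only [Term.xor.sizeOf_spec] at hsz
          have hnf : nf (subst σ (nf f)) = nf (subst σ f) := ih f (by omega)
          cases f with
          | var y => simp
          | name a => simp
          | pk u => rw [nfac_std (by simp; trivial), nfac_std (by simp; trivial), hnf]
          | pair u v => rw [nfac_std (by simp; trivial), nfac_std (by simp; trivial), hnf]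
          | senc u v => rw [nfac_std (by simp; trivial), nfac_std (by simp; trivial), hnf]
          | aenc u v => rw [nfac_std (by simp; trivial), nfac_std (by simp; trivial), hnf]
          | xor N => exact absurd hstd (not_std_xor N)
        -- count of σ t equals sum over nfac t
        have hsum : ∀ x, (nfac (subst σ (Term.xor M))).count x
            = ((nfac (Term.xor M)).map (fun v => (nfac (subst σ v)).count x)).sum := by
          intro x
          rw [count_nfac_subst]
          rw [nfac, List.map_map]
          congr 1
          apply List.map_congr_left
          intro f hf
          show (nfac (subst σ f)).count x = (nfac (subst σ (nf f))).count x
          exact hfac f hf x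
        rcases hm : red (nfac (Term.xor M)) with - | ⟨a, - | ⟨b, cs⟩⟩
        · -- everything cancels: both sides are zero
          rw [nf_xor_eq, hm, xorOf_nil, subst_zero, nf_zero]
          have hev : ∀ x, (nfac (subst σ (Term.xor M))).count x % 2 = 0 := by
            intro x
            rw [hsum x]
            exact evensum _ _ _ le_rfl (red_nil_iff.mp hm)
          exact (red_nfac_nil_nf (red_nil_iff.mpr (fun x => by
            have := hev x
            omega))).symm
        · -- singleton
          rw [nf_xor_eq, hm, xorOf_singleton]
          apply nf_eq_of_parity
          intro x
          rw [hsum x]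
          have hpe : ∀ v, (nfac (Term.xor M)).count v % 2 = ([a] : List Term).count v % 2 := by
            intro v
            rw [← red_count_parity, hm]
          have := pesum (fun v => (nfac (subst σ v)).count x) (nfac (Term.xor M)).length
            (nfac (Term.xor M)) [a] le_rfl hpe
          rw [this]
          simp
        · -- general case
          rw [nf_xor_eq, hm, xorOf_cons_cons]
          apply nf_eq_of_parity
          intro x
          have helts : ∀ y ∈ a :: b :: cs, y.IsStandard := by
            intro y hy
            exact (mem_red_nfac (t := Term.xor M) (w := y) (by rw [hm]; exact hy)).1
          have h1 : (nfac (subst σ (Term.xor (a :: b :: cs)))).count x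
              = ((a :: b :: cs).map (fun v => (nfac (subst σ v)).count x)).sum := by
            rw [count_nfac_subst, facL_xor, flatMap_id' _ _ (fun y hy => facL_std (helts y hy))]
          rw [h1, hsum x]
          have hpe : ∀ v, (nfac (Term.xor M)).count v % 2
              = ((a :: b :: cs) : List Term).count v % 2 := by
            intro v
            rw [← red_count_parity, hm]
          exact (pesum (fun v => (nfac (subst σ v)).count x) (nfac (Term.xor M)).length
            (nfac (Term.xor M)) (a :: b :: cs) le_rfl hpe).symm
  exact fun t => key (sizeOf t) t le_rfl


/-! ### Stage 6: analysis/synthesis characterization of derivability -/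

theorem nf_xor_single (q : Term) : nf (Term.xor [q]) = nf q := by
  rw [nf_eq_xorOf_red, nf_eq_xorOf_red (t := q)]
  congr 2
  rw [nfac_xor]
  simp

theorem count_nfac_xor (M : List Term) (x : Term) :
    (nfac (Term.xor M)).count x = (M.map (fun q => (nfac q).count x)).sum := by
  rw [nfac_xor, List.count_flatMap]
  rfl

theorem nfac_xor_cons (q : Term) (L : List Term) :
    nfac (Term.xor (q :: L)) = nfac q ++ nfac (Term.xor L) := by
  rw [nfac_xor, nfac_xor, List.flatMap_cons]

theorem nfac_xor_append (A B : List Term) :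
    nfac (Term.xor (A ++ B)) = nfac (Term.xor A) ++ nfac (Term.xor B) := by
  rw [nfac_xor, nfac_xor, nfac_xor, List.flatMap_append]

theorem odd_mem_exists {L : List Term} {g : Term → ℕ}
    (h : ¬ ((L.map g).sum % 2 = 0)) : ∃ q ∈ L, ¬ (g q % 2 = 0) := by
  induction L with
  | nil => simp at h
  | cons a T ih =>
    simp only [List.map_cons, List.sum_cons] at h
    by_cases ha : g a % 2 = 0
    · have : ¬ ((T.map g).sum % 2 = 0) := by omega
      obtain ⟨q, hq, h2⟩ := ih this
      exact ⟨q, by simp [hq], h2⟩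
    · exact ⟨a, by simp, ha⟩

theorem pair_ne_zero (a b : Term) : Term.pair a b ≠ Term.zero := by
  rw [show Term.zero = Term.name 0 from rfl]; simp
theorem senc_ne_zero (a b : Term) : Term.senc a b ≠ Term.zero := by
  rw [show Term.zero = Term.name 0 from rfl]; simp
theorem aenc_ne_zero (a b : Term) : Term.aenc a b ≠ Term.zero := by
  rw [show Term.zero = Term.name 0 from rfl]; simp

/-- Combined analysis (`false`) / synthesis (`true`) derivability. -/
inductive DN (X : Set Term) : Bool → Term → Prop where
  | ax {u : Term} : u ∈ X → nf u = u → DN X false u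
  | split1 {t u : Term} : DN X false (.pair t u) → DN X false t
  | split2 {t u : Term} : DN X false (.pair t u) → DN X false u
  | sdec {t v : Term} : DN X false (.senc t v) → DN X true v → DN X false t
  | adec {t : Term} {k : ℕ} :
      DN X false (.aenc t (.pk (.name k))) → DN X true (.name k) → DN X false t
  | xorA {l : List Term} {v w : Term} : (∀ q ∈ l, DN X true q) → DN X false v →
      IsFactor w v → w = nf (.xor l) → DN X false w
  | sub {u : Term} : DN X false u → DN X true u
  | pkI {k : ℕ} : DN X true (.name k) → DN X true (.pk (.name k))
  | pairI {u v : Term} : DN X true u → DN X true v → DN X true (.pair u v)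
  | sencI {u v : Term} : DN X true u → DN X true v → DN X true (.senc u v)
  | aencI {u : Term} {k : ℕ} :
      DN X true u → DN X true (.pk (.name k)) → DN X true (.aenc u (.pk (.name k)))
  | xorI {l : List Term} : (∀ q ∈ l, DN X true q) → DN X true (nf (.xor l))

theorem dn_norm {X : Set Term} {b : Bool} {u : Term} (h : DN X b u) : nf u = u := by
  induction h with
  | ax _ hn => exact hn
  | split1 _ ih => simp only [nf_pair, Term.pair.injEq] at ih; exact ih.1
  | split2 _ ih => simp only [nf_pair, Term.pair.injEq] at ih; exact ih.2
  | sdec _ _ ih _ => simp only [nf_senc, Term.senc.injEq] at ih; exact ih.1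
  | adec _ _ ih _ => simp only [nf_aenc, Term.aenc.injEq] at ih; exact ih.1
  | xorA _ _ _ he _ _ => rw [he]; exact nf_nf _
  | sub _ ih => exact ih
  | pkI _ ih => simp
  | pairI _ _ ih1 ih2 => simp [ih1, ih2]
  | sencI _ _ ih1 ih2 => simp [ih1, ih2]
  | aencI _ _ ih1 ih2 => simp [ih1, ih2]
  | xorI _ _ => exact nf_nf _

/-- Possible constructor shapes of a synthesized standard term. -/
def Shp (X : Set Term) (w : Term) : Prop :=
  (∃ k, w = Term.pk (.name k) ∧ DN X true (.name k)) ∨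
  (∃ a b, w = Term.pair a b ∧ DN X true a ∧ DN X true b) ∨
  (∃ a b, w = Term.senc a b ∧ DN X true a ∧ DN X true b) ∨
  (∃ a k, w = Term.aenc a (.pk (.name k)) ∧ DN X true a ∧ DN X true (.pk (.name k)))

theorem dn_chase {X : Set Term} {b : Bool} {m : Term} (hm : DN X b m) :
    ∀ w, w ≠ Term.zero → IsFactor w m →
      (∃ v, DN X false v ∧ IsFactor w v) ∨ Shp X w := by
  induction hm with
  | ax hX hn => exact fun w _ hf => Or.inl ⟨_, DN.ax hX hn, hf⟩
  | split1 h _ => exact fun w _ hf => Or.inl ⟨_, DN.split1 h, hf⟩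
  | split2 h _ => exact fun w _ hf => Or.inl ⟨_, DN.split2 h, hf⟩
  | sdec h1 h2 _ _ => exact fun w _ hf => Or.inl ⟨_, DN.sdec h1 h2, hf⟩
  | adec h1 h2 _ _ => exact fun w _ hf => Or.inl ⟨_, DN.adec h1 h2, hf⟩
  | xorA hl hv hfac he _ _ => exact fun w _ hf => Or.inl ⟨_, DN.xorA hl hv hfac he, hf⟩
  | sub h _ => exact fun w _ hf => Or.inl ⟨_, h, hf⟩
  | pkI h _ =>
    intro w _ hf
    rw [isFactor_std_iff (std_pk _)] at hf
    exact Or.inr (Or.inl ⟨_, hf, h⟩)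
  | pairI h1 h2 _ _ =>
    intro w _ hf
    rw [isFactor_std_iff (std_pair _ _)] at hf
    exact Or.inr (Or.inr (Or.inl ⟨_, _, hf, h1, h2⟩))
  | sencI h1 h2 _ _ =>
    intro w _ hf
    rw [isFactor_std_iff (std_senc _ _)] at hf
    exact Or.inr (Or.inr (Or.inr (Or.inl ⟨_, _, hf, h1, h2⟩)))
  | aencI h1 h2 _ _ =>
    intro w _ hf
    rw [isFactor_std_iff (std_aenc _ _)] at hf
    exact Or.inr (Or.inr (Or.inr (Or.inr ⟨_, _, hf, h1, h2⟩)))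
  | @xorI l hl ih =>
    intro w hw hf
    have hmem : w ∈ red (nfac (Term.xor l)) := mem_red_of_isFactor_nf hf hw
    have hodd : ¬ ((nfac (Term.xor l)).count w % 2 = 0) := red_mem.mp hmem
    rw [count_nfac_xor] at hodd
    obtain ⟨q, hq, hoddq⟩ := odd_mem_exists hodd
    have hfq : IsFactor w (nf q) := isFactor_of_mem_red (red_mem.mpr hoddq)
    rw [dn_norm (hl q hq)] at hfq
    exact ih q hq w hw hfq

theorem dn_main {X : Set Term} {w : Term} (h : DN X true w) (hw : w ≠ Term.zero)
    (hstd : w.IsStandard) : DN X false w ∨ Shp X w := by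
  rcases dn_chase h w hw (IsFactor.std hstd) with ⟨v, hv, hf⟩ | hs
  · left
    refine DN.xorA (l := [w]) ?_ hv hf ?_
    · intro q hq; simp at hq; subst hq; exact h
    · rw [nf_xor_single, dn_norm h]
  · right; exact hs

theorem isProof_dn {X : Set Term} : ∀ {π : PTree}, IsProof X π → DN X true π.conc := by
  intro π h
  induction h with
  | ax hX hn => exact DN.sub (DN.ax hX hn)
  | @split1 t u δ hδ hc ih =>
    rw [hc] at ih
    show DN X true t
    rcases dn_main ih (pair_ne_zero t u) (std_pair t u) with hA | hS
    · exact DN.sub (DN.split1 hA)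
    · rcases hS with ⟨k, he, -⟩ | ⟨a, b, he, h1, h2⟩ | ⟨a, b, he, -, -⟩ | ⟨a, k, he, -, -⟩ <;>
        (cases he <;> assumption)
  | @split2 t u δ hδ hc ih =>
    rw [hc] at ih
    show DN X true u
    rcases dn_main ih (pair_ne_zero t u) (std_pair t u) with hA | hS
    · exact DN.sub (DN.split2 hA)
    · rcases hS with ⟨k, he, -⟩ | ⟨a, b, he, h1, h2⟩ | ⟨a, b, he, -, -⟩ | ⟨a, k, he, -, -⟩ <;>
        (cases he <;> assumption)
  | @sdec t v δ₁ δ₂ h1 h2 hc1 hc2 ih1 ih2 =>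
    rw [hc1] at ih1
    rw [hc2] at ih2
    show DN X true t
    rcases dn_main ih1 (senc_ne_zero t v) (std_senc t v) with hA | hS
    · exact DN.sub (DN.sdec hA ih2)
    · rcases hS with ⟨k, he, -⟩ | ⟨a, b, he, -, -⟩ | ⟨a, b, he, h1', h2'⟩ | ⟨a, k, he, -, -⟩ <;>
        (cases he <;> assumption)
  | @adec t k δ₁ δ₂ h1 h2 hc1 hc2 ih1 ih2 =>
    rw [hc1] at ih1
    rw [hc2] at ih2
    show DN X true t
    rcases dn_main ih1 (aenc_ne_zero t _) (std_aenc t _) with hA | hS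
    · exact DN.sub (DN.adec hA ih2)
    · rcases hS with ⟨k', he, -⟩ | ⟨a, b, he, -, -⟩ | ⟨a, b, he, -, -⟩ | ⟨a, k', he, h1', h2'⟩ <;>
        (cases he <;> assumption)
  | @pkR k δ hδ hc ih =>
    rw [hc] at ih
    exact DN.pkI ih
  | pairR h1 h2 ih1 ih2 => exact DN.pairI ih1 ih2
  | sencR h1 h2 ih1 ih2 => exact DN.sencI ih1 ih2
  | @aencR k δ₁ δ₂ h1 h2 hc ih1 ih2 =>
    rw [hc] at ih2
    exact DN.aencI ih1 ih2
  | @xorR l hl ih =>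
    show DN X true (nf (.xor (l.map PTree.conc)))
    apply DN.xorI
    intro q hq
    obtain ⟨δ, hδ, he⟩ := List.mem_map.mp hq
    exact he ▸ ih δ hδ


/-! ### Stage 7a: nice proofs infrastructure -/

theorem nf_xor_nil : nf (Term.xor []) = Term.zero := by
  rw [nf_eq_xorOf_red]
  have h1 : nfac (Term.xor []) = [] := by rw [nfac_xor]; rfl
  rw [h1]
  have h2 : red [] = [] := by
    rw [red, sortT, List.mergeSort_nil]
    rfl
  rw [h2]
  rfl

theorem nfac_xor_singleton (q : Term) : nfac (Term.xor [q]) = nfac q := by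
  rw [nfac_xor]; simp

theorem sum_parity_congr {L : List Term} {g g' : Term → ℕ}
    (h : ∀ q ∈ L, g q % 2 = g' q % 2) :
    (L.map g).sum % 2 = (L.map g').sum % 2 := by
  induction L with
  | nil => rfl
  | cons a T ih =>
    simp only [List.map_cons, List.sum_cons]
    have h1 := h a (by simp)
    have h2 := ih (fun q hq => h q (by simp [hq]))
    omega

theorem sum_even {L : List Term} {g : Term → ℕ} (h : ∀ q ∈ L, g q % 2 = 0) :
    (L.map g).sum % 2 = 0 := by
  induction L with
  | nil => rfl
  | cons a T ih =>
    simp only [List.map_cons, List.sum_cons]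
    have h1 := h a (by simp)
    have h2 := ih (fun q hq => h q (by simp [hq]))
    omega

theorem xor_parity_of_elem_parity {A B : List Term}
    (h : ∀ a, A.count a % 2 = B.count a % 2) (x : Term) :
    (nfac (Term.xor A)).count x % 2 = (nfac (Term.xor B)).count x % 2 := by
  rw [count_nfac_xor, count_nfac_xor]
  exact pesum (fun q => (nfac q).count x) A.length A B le_rfl h

theorem conc_node (t : Term) (r : Rule) (l : List PTree) : (PTree.node t r l).conc = t := rfl
theorem rule_node (t : Term) (r : Rule) (l : List PTree) : (PTree.node t r l).rule = r := rfl

theorem subproof_node {δ : PTree} {t : Term} {r : Rule} {l : List PTree}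
    (h : Subproof δ (.node t r l)) : δ = .node t r l ∨ ∃ p ∈ l, Subproof δ p := by
  cases h with
  | refl => exact Or.inl rfl
  | child hp hs => exact Or.inr ⟨_, hp, hs⟩

theorem mem_nfSubst {σ : ℕ → Term} {Y : Set Term} {u : Term} (h : u ∈ Y) :
    nf (subst σ u) ∈ nfSubst σ Y := ⟨u, h, rfl⟩

/-- constructor rules of interest -/
def CR (r : Rule) : Prop := r = .pairR ∨ r = .aencR ∨ r = .sencR

/-- a nice proof of `nf (σ u)` -/
def Nice (σ : ℕ → Term) (X C D : Set Term) (u : Term) : Prop :=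
  ∃ π : PTree, IsProof (nfSubst σ X) π ∧ π.conc = nf (subst σ u) ∧
    termsOf π ⊆ nfSubst σ C ∧
    ∀ δ : PTree, Subproof δ π → CR δ.rule → δ.conc ∈ nfSubst σ D

theorem nice_mk {σ : ℕ → Term} {X C D : Set Term} {u t : Term} {r : Rule} {l : List PTree}
    (hP : IsProof (nfSubst σ X) (.node t r l))
    (hconc : t = nf (subst σ u))
    (hC : u ∈ C)
    (hl : ∀ p ∈ l, termsOf p ⊆ nfSubst σ C)
    (htyp : CR r → t ∈ nfSubst σ D)
    (hltyp : ∀ p ∈ l, ∀ δ : PTree, Subproof δ p → CR δ.rule → δ.conc ∈ nfSubst σ D) :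
    Nice σ X C D u := by
  refine ⟨.node t r l, hP, hconc, ?_, ?_⟩
  · intro v hv
    obtain ⟨δ, hs, he⟩ := hv
    rcases subproof_node hs with rfl | ⟨p, hp, hs'⟩
    · rw [conc_node] at he
      rw [← he, hconc]
      exact mem_nfSubst hC
    · exact hl p hp ⟨δ, hs', he⟩
  · intro δ hs hr
    rcases subproof_node hs with rfl | ⟨p, hp, hs'⟩
    · rw [rule_node] at hr
      rw [conc_node]
      exact htyp hr
    · exact hltyp p hp δ hs' hr

theorem nice_list {σ : ℕ → Term} {X C D : Set Term} :
    ∀ (L : List Term), (∀ q ∈ L, Nice σ X C D q) →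
      ∃ ps : List PTree, ps.map PTree.conc = L.map (fun q => nf (subst σ q)) ∧
        (∀ p ∈ ps, IsProof (nfSubst σ X) p) ∧
        (∀ p ∈ ps, termsOf p ⊆ nfSubst σ C) ∧
        (∀ p ∈ ps, ∀ δ : PTree, Subproof δ p → CR δ.rule → δ.conc ∈ nfSubst σ D) := by
  intro L
  induction L with
  | nil => exact fun _ => ⟨[], rfl, by simp, by simp, by simp⟩
  | cons q T ih =>
    intro h
    obtain ⟨π, h1, h2, h3, h4⟩ := h q (by simp)
    obtain ⟨ps, g1, g2, g3, g4⟩ := ih (fun x hx => h x (by simp [hx]))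
    refine ⟨π :: ps, ?_, ?_, ?_, ?_⟩
    · simp only [List.map_cons, g1, h2]
    · intro p hp; rcases List.mem_cons.mp hp with rfl | hp'
      · exact h1
      · exact g2 p hp'
    · intro p hp; rcases List.mem_cons.mp hp with rfl | hp'
      · exact h3
      · exact g3 p hp'
    · intro p hp; rcases List.mem_cons.mp hp with rfl | hp'
      · exact h4
      · exact g4 p hp'

theorem nice_zero {σ : ℕ → Term} {X C D : Set Term} (h0 : Term.zero ∈ C) :
    Nice σ X C D Term.zero := by
  apply nice_mk (r := .xorR) (l := []) (t := Term.zero) ?_ ?_ h0 (by simp) ?_ (by simp)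
  · have := IsProof.xorR (X := nfSubst σ X) (l := []) (by simp)
    simpa [nf_xor_nil] using this
  · rw [subst_zero, nf_zero]
  · intro hr
    rcases hr with h | h | h <;> cases h


/-! ### Stage 7b: flattening and the xor builder -/

/-- goodness of an xor-operand -/
def Gq (σ : ℕ → Term) (X C D : Set Term) (q : Term) : Prop :=
  nf q = q ∧ (q ∈ C → Nice σ X C D q) ∧ (¬ q.IsStandard → q ∈ C)

/-- decomposability into good operands, up to factor parity -/
def GoodL (σ : ℕ → Term) (X C D : Set Term) (u : Term) : Prop :=
  ∃ L : List Term, (∀ x, (nfac (Term.xor L)).count x % 2 = (nfac u).count x % 2) ∧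
    ∀ q ∈ L, Gq σ X C D q

theorem flat_list {σ : ℕ → Term} {X C D : Set Term} :
    ∀ (l : List Term),
      (∀ q ∈ l, nf q = q ∧ (q ∈ C → Nice σ X C D q) ∧
        (¬ q.IsStandard → q ∈ C ∨ GoodL σ X C D q)) →
      ∃ L₀ : List Term,
        (∀ x, (nfac (Term.xor L₀)).count x % 2 = (nfac (Term.xor l)).count x % 2) ∧
        ∀ q ∈ L₀, Gq σ X C D q := by
  intro l
  induction l with
  | nil => exact fun _ => ⟨[], fun x => rfl, by simp⟩
  | cons q T ih =>
    intro h
    obtain ⟨L₀, hp, hg⟩ := ih (fun x hx => h x (by simp [hx]))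
    obtain ⟨hn, hniceC, hns⟩ := h q (by simp)
    by_cases hq : q.IsStandard ∨ q ∈ C
    · refine ⟨q :: L₀, ?_, ?_⟩
      · intro x
        rw [nfac_xor_cons, nfac_xor_cons, List.count_append, List.count_append]
        have := hp x
        omega
      · intro p hp'
        rcases List.mem_cons.mp hp' with rfl | hp''
        · exact ⟨hn, hniceC, fun hns' => hq.resolve_left hns'⟩
        · exact hg p hp''
    · push_neg at hq
      obtain ⟨Lq, hLqp, hLqg⟩ := (hns hq.1).resolve_left hq.2
      refine ⟨Lq ++ L₀, ?_, ?_⟩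
      · intro x
        rw [nfac_xor_append, nfac_xor_cons, List.count_append, List.count_append]
        have h1 := hp x
        have h2 := hLqp x
        omega
      · intro p hp'
        rcases List.mem_append.mp hp' with hp'' | hp''
        · exact hLqg p hp''
        · exact hg p hp''

theorem xor_build {σ : ℕ → Term} {X C D : Set Term}
    (hCsub : ∀ {a b : Term}, Subterm a b → b ∈ C → a ∈ C)
    {w : Term} (hwC : w ∈ C) (hwn : nf w = w)
    {L : List Term}
    (hLp : ∀ x, (nfac (Term.xor L)).count x % 2 = (nfac w).count x % 2)
    (hG : ∀ q ∈ L, Gq σ X C D q) :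
    Nice σ X C D w := by
  classical
  set L₁ := L.dedup.filter (fun a => decide (¬ (L.count a % 2 = 0))) with hL₁def
  have hmem₁ : ∀ a, a ∈ L₁ ↔ ¬ (L.count a % 2 = 0) := by
    intro a
    rw [hL₁def, List.mem_filter, List.mem_dedup, decide_eq_true_eq]
    constructor
    · exact fun h => h.2
    · intro h
      refine ⟨?_, h⟩
      have : 0 < L.count a := by omega
      exact List.count_pos_iff.mp this
  have hnd₁ : L₁.Nodup := (L.nodup_dedup).filter _
  have hsub₁ : ∀ a ∈ L₁, a ∈ L := by
    intro a ha
    have := (hmem₁ a).mp ha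
    exact List.count_pos_iff.mp (by omega)
  have hcnt₁ : ∀ a, L₁.count a % 2 = L.count a % 2 := by
    intro a
    by_cases h : a ∈ L₁
    · rw [List.count_eq_one_of_mem hnd₁ h]
      have := (hmem₁ a).mp h
      omega
    · rw [List.count_eq_zero.mpr h]
      by_cases h2 : L.count a % 2 = 0
      · simp [h2]
      · exact absurd ((hmem₁ a).mpr h2) h
  have hG₁ : ∀ q ∈ L₁, Gq σ X C D q := fun q hq => hG q (hsub₁ q hq)
  have hp₁ : ∀ x, (nfac (Term.xor L₁)).count x % 2 = (nfac w).count x % 2 := by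
    intro x
    rw [xor_parity_of_elem_parity hcnt₁ x]
    exact hLp x
  have hnfL₁ : nf (Term.xor L₁) = w := by
    have := nf_eq_of_parity (s₁ := Term.xor L₁) (s₂ := w) hp₁
    rw [hwn] at this; exact this
  have hL₁C : ∀ q ∈ L₁, q ∈ C := by
    intro q hq
    by_cases hstd : q.IsStandard
    · have hqn : nf q = q := (hG₁ q hq).1
      have hgq : (nfac q).count q = 1 := by
        rw [nfac_std hstd, hqn]; simp
      have hperm : L₁.Perm (q :: L₁.erase q) := List.perm_cons_erase hq
      have hsum : (nfac (Term.xor L₁)).count q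
          = 1 + ((L₁.erase q).map (fun p => (nfac p).count q)).sum := by
        rw [count_nfac_xor]
        rw [(hperm.map (fun p => (nfac p).count q)).sum_eq]
        simp only [List.map_cons, List.sum_cons, hgq]
      by_cases hodd : (nfac (Term.xor L₁)).count q % 2 = 0
      · have hrest : ¬ (((L₁.erase q).map (fun p => (nfac p).count q)).sum % 2 = 0) := by
          omega
        obtain ⟨p, hpmem, hpodd⟩ := odd_mem_exists hrest
        have hpL₁ : p ∈ L₁ := List.mem_of_mem_erase hpmem
        have hpne : p ≠ q := by
          intro e; subst e
          exact (hnd₁.not_mem_erase) hpmem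
        have hfq : IsFactor q (nf p) := isFactor_of_mem_red (red_mem.mpr hpodd)
        rw [(hG₁ p hpL₁).1] at hfq
        have hpns : ¬ p.IsStandard := by
          intro hps
          rw [isFactor_std_iff hps] at hfq
          exact hpne hfq.symm
        have hpC : p ∈ C := (hG₁ p hpL₁).2.2 hpns
        exact hCsub (subterm_of_isFactor hfq) hpC
      · have hwodd : ¬ ((nfac w).count q % 2 = 0) := by
          have := hp₁ q; omega
        have hfq : IsFactor q (nf w) := isFactor_of_mem_red (red_mem.mpr hwodd)
        rw [hwn] at hfq
        exact hCsub (subterm_of_isFactor hfq) hwC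
    · exact (hG₁ q hq).2.2 hstd
  set L₂ := L₁.filter (fun q => decide (¬ (red (nfac (subst σ q)) = []))) with hL₂def
  have hsub₂ : ∀ q ∈ L₂, q ∈ L₁ := fun q hq => (List.mem_filter.mp hq).1
  have hne₂ : ∀ q ∈ L₂, ¬ (red (nfac (subst σ q)) = []) := by
    intro q hq
    exact of_decide_eq_true (List.mem_filter.mp hq).2
  have hnice₂ : ∀ q ∈ L₂, Nice σ X C D q := by
    intro q hq
    exact (hG₁ q (hsub₂ q hq)).2.1 (hL₁C q (hsub₂ q hq))
  obtain ⟨ps, hps1, hps2, hps3, hps4⟩ := nice_list L₂ hnice₂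
  have hconc : nf (Term.xor (ps.map PTree.conc)) = nf (subst σ w) := by
    rw [hps1]
    have hstep1 : nf (subst σ w) = nf (subst σ (Term.xor L₁)) := by
      conv_lhs => rw [← hnfL₁]
      exact nf_subst_nf σ (Term.xor L₁)
    rw [hstep1]
    apply nf_eq_of_parity
    intro x
    have e1 : (nfac (Term.xor (L₂.map (fun q => nf (subst σ q))))).count x
        = (L₂.map (fun q => (nfac (nf (subst σ q))).count x)).sum := by
      rw [count_nfac_xor, List.map_map]
      rfl
    have e2 : (L₂.map (fun q => (nfac (nf (subst σ q))).count x)).sum % 2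
        = (L₂.map (fun q => (nfac (subst σ q)).count x)).sum % 2 := by
      apply sum_parity_congr
      intro q hq
      exact nfac_nf_parity (hne₂ q hq) x
    have hpermf := List.filter_append_perm
      (fun q => decide (¬ (red (nfac (subst σ q)) = []))) L₁
    have e3 : (L₁.map (fun q => (nfac (subst σ q)).count x)).sum
        = (L₂.map (fun q => (nfac (subst σ q)).count x)).sum
          + ((L₁.filter (fun q => !decide (¬ (red (nfac (subst σ q)) = [])))).map
              (fun q => (nfac (subst σ q)).count x)).sum := by
      rw [← (hpermf.map (fun q => (nfac (subst σ q)).count x)).sum_eq]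
      rw [List.map_append, List.sum_append]
    have e4 : ((L₁.filter (fun q => !decide (¬ (red (nfac (subst σ q)) = [])))).map
        (fun q => (nfac (subst σ q)).count x)).sum % 2 = 0 := by
      apply sum_even
      intro q hq
      have h2 := (List.mem_filter.mp hq).2
      rw [Bool.not_eq_true'] at h2
      have h3 : red (nfac (subst σ q)) = [] := not_not.mp (of_decide_eq_false h2)
      exact red_nil_iff.mp h3 x
    have e5 : (nfac (subst σ (Term.xor L₁))).count x
        = (L₁.map (fun q => (nfac (subst σ q)).count x)).sum := by
      rw [subst_xor, count_nfac_xor, List.map_map]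
      rfl
    rw [e1, e5]
    omega
  have hnotCR : ¬ CR Rule.xorR := by
    intro h; rcases h with h | h | h <;> cases h
  exact nice_mk (IsProof.xorR hps2) hconc hwC hps3
    (fun hr => absurd hr hnotCR) hps4


/-! ### Stage 7c: the main construction -/

theorem not_CR_of {r : Rule} (h1 : r ≠ .pairR) (h2 : r ≠ .aencR) (h3 : r ≠ .sencR) :
    ¬ CR r := fun h => by
  rcases h with h | h | h
  exacts [h1 h, h2 h, h3 h]

theorem dn_build {σ : ℕ → Term} {X C D : Set Term}
    (hXC : X ⊆ C)
    (hCsub : ∀ {a b : Term}, Subterm a b → b ∈ C → a ∈ C)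
    (hCD : ∀ u, u ∈ C → u.IsStandard → (∀ x, u ≠ Term.var x) → u ∈ D) :
    ∀ {b : Bool} {u : Term}, DN X b u →
      (b = false → u ∈ C ∧ Nice σ X C D u) ∧
      (b = true → (u ∈ C → Nice σ X C D u) ∧ GoodL σ X C D u) := by
  intro b u h
  induction h with
  | @ax u hu hn =>
    refine ⟨fun _ => ⟨hXC hu, ?_⟩, fun hb => absurd hb (by decide)⟩
    exact nice_mk (u := u) (r := .ax) (l := [])
      (IsProof.ax (mem_nfSubst hu) (nf_nf _)) rfl (hXC hu) (by simp)
      (fun hr => absurd hr (not_CR_of (by decide) (by decide) (by decide))) (by simp)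
  | @split1 t u h ih =>
    obtain ⟨hpC, hpN⟩ := ih.1 rfl
    refine ⟨fun _ => ⟨hCsub (Subterm.pair_l (Subterm.refl t)) hpC, ?_⟩,
      fun hb => absurd hb (by decide)⟩
    obtain ⟨π₁, hP1, hc1, ht1, hty1⟩ := hpN
    have hc1' : π₁.conc = .pair (nf (subst σ t)) (nf (subst σ u)) := by rw [hc1]; simp
    exact nice_mk (u := t) (r := .split1) (l := [π₁])
      (IsProof.split1 hP1 hc1') rfl (hCsub (Subterm.pair_l (Subterm.refl t)) hpC)
      (fun p hp => by simp at hp; subst hp; exact ht1)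
      (fun hr => absurd hr (not_CR_of (by decide) (by decide) (by decide)))
      (fun p hp => by simp at hp; subst hp; exact hty1)
  | @split2 t u h ih =>
    obtain ⟨hpC, hpN⟩ := ih.1 rfl
    refine ⟨fun _ => ⟨hCsub (Subterm.pair_r (Subterm.refl u)) hpC, ?_⟩,
      fun hb => absurd hb (by decide)⟩
    obtain ⟨π₁, hP1, hc1, ht1, hty1⟩ := hpN
    have hc1' : π₁.conc = .pair (nf (subst σ t)) (nf (subst σ u)) := by rw [hc1]; simp
    exact nice_mk (u := u) (r := .split2) (l := [π₁])
      (IsProof.split2 hP1 hc1') rfl (hCsub (Subterm.pair_r (Subterm.refl u)) hpC)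
      (fun p hp => by simp at hp; subst hp; exact ht1)
      (fun hr => absurd hr (not_CR_of (by decide) (by decide) (by decide)))
      (fun p hp => by simp at hp; subst hp; exact hty1)
  | @sdec t v h1 h2 ih1 ih2 =>
    obtain ⟨hsC, hsN⟩ := ih1.1 rfl
    have htC : t ∈ C := hCsub (Subterm.senc_l (Subterm.refl t)) hsC
    have hvC : v ∈ C := hCsub (Subterm.senc_r (Subterm.refl v)) hsC
    refine ⟨fun _ => ⟨htC, ?_⟩, fun hb => absurd hb (by decide)⟩
    obtain ⟨π₁, hP1, hc1, ht1, hty1⟩ := hsN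
    obtain ⟨π₂, hP2, hc2, ht2, hty2⟩ := (ih2.2 rfl).1 hvC
    have hc1' : π₁.conc = .senc (nf (subst σ t)) (nf (subst σ v)) := by rw [hc1]; simp
    exact nice_mk (u := t) (r := .sdec) (l := [π₁, π₂])
      (IsProof.sdec hP1 hP2 hc1' hc2) rfl htC
      (fun p hp => by
        rcases List.mem_cons.mp hp with rfl | hp2
        · exact ht1
        · simp at hp2; subst hp2; exact ht2)
      (fun hr => absurd hr (not_CR_of (by decide) (by decide) (by decide)))
      (fun p hp => by
        rcases List.mem_cons.mp hp with rfl | hp2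
        · exact hty1
        · simp at hp2; subst hp2; exact hty2)
  | @adec t k h1 h2 ih1 ih2 =>
    obtain ⟨haC, haN⟩ := ih1.1 rfl
    have htC : t ∈ C := hCsub (Subterm.aenc_l (Subterm.refl t)) haC
    have hkC : Term.name k ∈ C := hCsub (Subterm.aenc_r (Subterm.pk (Subterm.refl _))) haC
    refine ⟨fun _ => ⟨htC, ?_⟩, fun hb => absurd hb (by decide)⟩
    obtain ⟨π₁, hP1, hc1, ht1, hty1⟩ := haN
    obtain ⟨π₂, hP2, hc2, ht2, hty2⟩ := (ih2.2 rfl).1 hkC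
    have hc1' : π₁.conc = .aenc (nf (subst σ t)) (.pk (.name k)) := by rw [hc1]; simp
    have hc2' : π₂.conc = .name k := by rw [hc2]; simp
    exact nice_mk (u := t) (r := .adec) (l := [π₁, π₂])
      (IsProof.adec hP1 hP2 hc1' hc2') rfl htC
      (fun p hp => by
        rcases List.mem_cons.mp hp with rfl | hp2
        · exact ht1
        · simp at hp2; subst hp2; exact ht2)
      (fun hr => absurd hr (not_CR_of (by decide) (by decide) (by decide)))
      (fun p hp => by
        rcases List.mem_cons.mp hp with rfl | hp2
        · exact hty1
        · simp at hp2; subst hp2; exact hty2)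
  | @xorA l v w hl hv hfac he ihl ihv =>
    have hwC : w ∈ C := hCsub (subterm_of_isFactor hfac) ((ihv.1 rfl).1)
    refine ⟨fun _ => ⟨hwC, ?_⟩, fun hb => absurd hb (by decide)⟩
    obtain ⟨L₀, hp0, hg0⟩ := flat_list l (fun q hq =>
      ⟨dn_norm (hl q hq), fun hc => ((ihl q hq).2 rfl).1 hc,
        fun _ => Or.inr ((ihl q hq).2 rfl).2⟩)
    by_cases hred : red (nfac (Term.xor l)) = []
    · have hz : w = Term.zero := he.trans (red_nfac_nil_nf hred)
      exact hz ▸ nice_zero (hz ▸ hwC)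
    · apply xor_build hCsub hwC (by rw [he]; exact nf_nf _) ?_ hg0
      intro x
      have e1 := nfac_nf_parity (t := Term.xor l) hred x
      have e2 := hp0 x
      rw [he]
      omega
  | @sub u h ih =>
    refine ⟨fun hb => absurd hb (by decide), fun _ => ⟨fun _ => (ih.1 rfl).2, ?_⟩⟩
    exact ⟨[u], fun x => by rw [nfac_xor_singleton],
      fun q hq => by
        simp at hq; subst hq
        exact ⟨dn_norm h, fun _ => (ih.1 rfl).2, fun _ => (ih.1 rfl).1⟩⟩
  | @pkI k h ih =>
    have hnic : Term.pk (.name k) ∈ C → Nice σ X C D (Term.pk (.name k)) := by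
      intro hC
      have hkC : Term.name k ∈ C := hCsub (Subterm.pk (Subterm.refl _)) hC
      obtain ⟨π₁, hP1, hc1, ht1, hty1⟩ := (ih.2 rfl).1 hkC
      have hc1' : π₁.conc = .name k := by rw [hc1]; simp
      exact nice_mk (u := Term.pk (.name k)) (r := .pkR) (l := [π₁])
        (IsProof.pkR hP1 hc1') (by simp) hC
        (fun p hp => by simp at hp; subst hp; exact ht1)
        (fun hr => absurd hr (not_CR_of (by decide) (by decide) (by decide)))
        (fun p hp => by simp at hp; subst hp; exact hty1)
    refine ⟨fun hb => absurd hb (by decide), fun _ => ⟨hnic, ?_⟩⟩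
    exact ⟨[Term.pk (.name k)], fun x => by rw [nfac_xor_singleton],
      fun q hq => by
        simp at hq; subst hq
        exact ⟨by simp, hnic, fun hns => absurd (std_pk _) hns⟩⟩
  | @pairI a b h1 h2 ih1 ih2 =>
    have hnic : Term.pair a b ∈ C → Nice σ X C D (Term.pair a b) := by
      intro hC
      have haC : a ∈ C := hCsub (Subterm.pair_l (Subterm.refl a)) hC
      have hbC : b ∈ C := hCsub (Subterm.pair_r (Subterm.refl b)) hC
      obtain ⟨π₁, hP1, hc1, ht1, hty1⟩ := (ih1.2 rfl).1 haC
      obtain ⟨π₂, hP2, hc2, ht2, hty2⟩ := (ih2.2 rfl).1 hbC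
      have hconc : Term.pair π₁.conc π₂.conc = nf (subst σ (Term.pair a b)) := by
        rw [hc1, hc2]; simp
      have hD : Term.pair a b ∈ D :=
        hCD _ hC (std_pair a b) (fun x => by simp)
      exact nice_mk (u := Term.pair a b) (r := .pairR) (l := [π₁, π₂])
        (IsProof.pairR hP1 hP2) hconc hC
        (fun p hp => by
        rcases List.mem_cons.mp hp with rfl | hp2
        · exact ht1
        · simp at hp2; subst hp2; exact ht2)
        (fun _ => hconc ▸ mem_nfSubst hD)
        (fun p hp => by
        rcases List.mem_cons.mp hp with rfl | hp2
        · exact hty1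
        · simp at hp2; subst hp2; exact hty2)
    refine ⟨fun hb => absurd hb (by decide), fun _ => ⟨hnic, ?_⟩⟩
    exact ⟨[Term.pair a b], fun x => by rw [nfac_xor_singleton],
      fun q hq => by
        simp at hq; subst hq
        exact ⟨by simp [dn_norm h1, dn_norm h2], hnic, fun hns => absurd (std_pair _ _) hns⟩⟩
  | @sencI a b h1 h2 ih1 ih2 =>
    have hnic : Term.senc a b ∈ C → Nice σ X C D (Term.senc a b) := by
      intro hC
      have haC : a ∈ C := hCsub (Subterm.senc_l (Subterm.refl a)) hC
      have hbC : b ∈ C := hCsub (Subterm.senc_r (Subterm.refl b)) hC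
      obtain ⟨π₁, hP1, hc1, ht1, hty1⟩ := (ih1.2 rfl).1 haC
      obtain ⟨π₂, hP2, hc2, ht2, hty2⟩ := (ih2.2 rfl).1 hbC
      have hconc : Term.senc π₁.conc π₂.conc = nf (subst σ (Term.senc a b)) := by
        rw [hc1, hc2]; simp
      have hD : Term.senc a b ∈ D :=
        hCD _ hC (std_senc a b) (fun x => by simp)
      exact nice_mk (u := Term.senc a b) (r := .sencR) (l := [π₁, π₂])
        (IsProof.sencR hP1 hP2) hconc hC
        (fun p hp => by
        rcases List.mem_cons.mp hp with rfl | hp2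
        · exact ht1
        · simp at hp2; subst hp2; exact ht2)
        (fun _ => hconc ▸ mem_nfSubst hD)
        (fun p hp => by
        rcases List.mem_cons.mp hp with rfl | hp2
        · exact hty1
        · simp at hp2; subst hp2; exact hty2)
    refine ⟨fun hb => absurd hb (by decide), fun _ => ⟨hnic, ?_⟩⟩
    exact ⟨[Term.senc a b], fun x => by rw [nfac_xor_singleton],
      fun q hq => by
        simp at hq; subst hq
        exact ⟨by simp [dn_norm h1, dn_norm h2], hnic, fun hns => absurd (std_senc _ _) hns⟩⟩
  | @aencI a k h1 h2 ih1 ih2 =>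
    have hnic : Term.aenc a (.pk (.name k)) ∈ C → Nice σ X C D (Term.aenc a (.pk (.name k))) := by
      intro hC
      have haC : a ∈ C := hCsub (Subterm.aenc_l (Subterm.refl a)) hC
      have hbC : Term.pk (.name k) ∈ C := hCsub (Subterm.aenc_r (Subterm.refl _)) hC
      obtain ⟨π₁, hP1, hc1, ht1, hty1⟩ := (ih1.2 rfl).1 haC
      obtain ⟨π₂, hP2, hc2, ht2, hty2⟩ := (ih2.2 rfl).1 hbC
      have hc2' : π₂.conc = .pk (.name k) := by rw [hc2]; simp
      have hconc : Term.aenc π₁.conc (.pk (.name k)) = nf (subst σ (Term.aenc a (.pk (.name k)))) := by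
        rw [hc1]; simp
      have hD : Term.aenc a (.pk (.name k)) ∈ D :=
        hCD _ hC (std_aenc _ _) (fun x => by simp)
      exact nice_mk (u := Term.aenc a (.pk (.name k))) (r := .aencR) (l := [π₁, π₂])
        (IsProof.aencR hP1 hP2 hc2') hconc hC
        (fun p hp => by
        rcases List.mem_cons.mp hp with rfl | hp2
        · exact ht1
        · simp at hp2; subst hp2; exact ht2)
        (fun _ => hconc ▸ mem_nfSubst hD)
        (fun p hp => by
        rcases List.mem_cons.mp hp with rfl | hp2
        · exact hty1
        · simp at hp2; subst hp2; exact hty2)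
    refine ⟨fun hb => absurd hb (by decide), fun _ => ⟨hnic, ?_⟩⟩
    exact ⟨[Term.aenc a (.pk (.name k))], fun x => by rw [nfac_xor_singleton],
      fun q hq => by
        simp at hq; subst hq
        exact ⟨by simp [dn_norm h1], hnic, fun hns => absurd (std_aenc _ _) hns⟩⟩
  | @xorI l hl ihl =>
    obtain ⟨L₀, hp0, hg0⟩ := flat_list l (fun q hq =>
      ⟨dn_norm (hl q hq), fun hc => ((ihl q hq).2 rfl).1 hc,
        fun _ => Or.inr ((ihl q hq).2 rfl).2⟩)
    refine ⟨fun hb => absurd hb (by decide), fun _ => ⟨?_, ?_⟩⟩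
    · intro hC
      by_cases hred : red (nfac (Term.xor l)) = []
      · have hz : nf (Term.xor l) = Term.zero := red_nfac_nil_nf hred
        exact hz ▸ nice_zero (hz ▸ hC)
      · apply xor_build hCsub hC (nf_nf _) ?_ hg0
        intro x
        have e1 := nfac_nf_parity (t := Term.xor l) hred x
        have e2 := hp0 x
        omega
    · by_cases hred : red (nfac (Term.xor l)) = []
      · have hz : nf (Term.xor l) = Term.zero := red_nfac_nil_nf hred
        rw [hz]
        exact ⟨[Term.zero], fun x => by rw [nfac_xor_singleton],
          fun q hq => by
            simp at hq; subst hq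
            exact ⟨nf_zero, fun h0 => nice_zero h0, fun hns => absurd (std_name 0) hns⟩⟩
      · refine ⟨L₀, ?_, hg0⟩
        intro x
        have e1 := nfac_nf_parity (t := Term.xor l) hred x
        have e2 := hp0 x
        omega


/-- **Corollary.** If `X ∪ {t} ⊆ C` and `X ⊢_dy t`, then there
is a proof `π*` of `nf(Xσ) ⊢ nf(tσ)` such that `terms(π*) ⊆ nf(Cσ)`, and
moreover `conc(δ*) ∈ nf(Dσ)` for every subproof `δ*` of `π*` whose last rule is
`pair`, `aenc` or `senc`. -/
theorem whconst_proofs (P : Protocol) (hP : P.WF)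
    (S : List (Role × (ℕ → Term))) (ξ : List (Term × Term)) (σ : ℕ → Term)
    (hrun : IsRun P S ξ σ)
    (X : Set Term) (t : Term)
    (hsub : X ∪ {t} ⊆ Cset P S ξ) (h : Derives X t) :
    ∃ π : PTree, IsProof (nfSubst σ X) π ∧ π.conc = nf (subst σ t) ∧
      termsOf π ⊆ nfSubst σ (Cset P S ξ) ∧
      ∀ δ : PTree, Subproof δ π →
        (δ.rule = .pairR ∨ δ.rule = .aencR ∨ δ.rule = .sencR) →
        δ.conc ∈ TypedSet P S ξ σ := by
  classical
  obtain ⟨π₀, hp0, hc0⟩ := h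
  have hXC : X ⊆ Cset P S ξ := fun x hx => hsub (Or.inl hx)
  have htC : t ∈ Cset P S ξ := hsub (Or.inr rfl)
  have hCsub : ∀ {a b : Term}, Subterm a b → b ∈ Cset P S ξ → a ∈ Cset P S ξ := by
    intro a b hab hb
    obtain ⟨r, hr, hbr⟩ := hb
    exact ⟨r, hr, subterm_trans hab hbr⟩
  have hCD : ∀ u, u ∈ Cset P S ξ → u.IsStandard → (∀ x, u ≠ Term.var x) →
      u ∈ Dset P S ξ := fun u h1 h2 h3 => ⟨h1, h2, h3⟩
  have hdn : DN X true t := hc0 ▸ isProof_dn hp0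
  have hnice := ((dn_build (σ := σ) (C := Cset P S ξ) (D := Dset P S ξ)
    hXC hCsub hCD hdn).2 rfl).1 htC
  obtain ⟨π, h1, h2, h3, h4⟩ := hnice
  exact ⟨π, h1, h2, h3, fun δ hs hr => h4 δ hs hr⟩

end DYXor
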